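/- arXiv:2108.06405 — 2 statements merged into one kernel-verified Lean document; each statement's English description precedes it below -/
import Mathlib

section
/- Let 𝒟 be a planning description representing a conformant planning problem 𝒫, let s, s' ⊆ F be states, p = [a₁; a₂; …; aₙ] a plan, i a positive integer, and X a stable model of CP'[0,i−1] such that s' = {f ∈ F | h(f,i−1) ∈ X} and α(i−1) ∉ X. Then τ({s'},p) = s if and only if there is a unique stable model Y of X ∪ ⋃_{j=i}^{i+n−1} (CP'[j] ∪ fixcons({occ(a_{j−i+1},j)}, Occ_j)) such that s = {f ∈ F | h(f,i+n−1) ∈ Y}; furthermore, for such Y it holds that α(i+n−1) ∉ Y. -/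
namespace ASP

universe u v

variable {α : Type u} {β : Type v}

/-- A literal over atoms `α`: an atom or its default negation. -/
inductive Lit (α : Type u) where
  | pos (a : α)
  | neg (a : α)

/-- Satisfaction of a literal by a set of atoms. -/
def Lit.sat (X : Set α) : Lit α → Prop
  | .pos a => a ∈ X
  | .neg a => a ∉ X

/-- The atom occurring in a literal. -/
def Lit.atomOf : Lit α → α
  | .pos a => a
  | .neg a => a

/-- The head of a rule: an atom (normal rule), a choice `{p}`, or `⊥` (constraint). -/
inductive Head (α : Type u) where
  | atom (a : α)
  | choice (a : α)
  | bot

def Head.atoms : Head α → Set α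
  | .atom a => {a}
  | .choice a => {a}
  | .bot => ∅

/-- A rule `H ← B` with head `H` and body `B`, a set of literals. -/
structure Rule (α : Type u) where
  head : Head α
  body : Set (Lit α)

/-- A logic program is a set of rules. -/
abbrev Program (α : Type u) := Set (Rule α)

def ruleAtoms (r : Rule α) : Set α := r.head.atoms ∪ Lit.atomOf '' r.body

def progAtoms (P : Program α) : Set α := ⋃ r ∈ P, ruleAtoms r

/-- `M` satisfies the `X`-reduct of a literal, i.e. the literal where any literal
not satisfied by `X` has been replaced by `⊥`. -/
def Lit.redSat (X M : Set α) (l : Lit α) : Prop := l.sat X ∧ l.sat M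

/-- `M` satisfies the `X`-reduct of a head (`{p}` is read as `p ∨ ¬ p`). -/
def Head.redSat (X M : Set α) : Head α → Prop
  | .atom a => a ∈ X ∧ a ∈ M
  | .choice a => (a ∈ X ∧ a ∈ M) ∨ (a ∉ X ∧ a ∉ M)
  | .bot => False

/-- `M` is a model of the formula obtained from `P` by replacing every literal
not satisfied by `X` with `⊥`. -/
def redModel (P : Program α) (X M : Set α) : Prop :=
  ∀ r ∈ P, (∀ l ∈ r.body, l.redSat X M) → r.head.redSat X M

/-- `X` is a stable model of `P`: a subset-minimal model of the `X`-reduct of `P`. -/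
def StableModel (P : Program α) (X : Set α) : Prop :=
  redModel P X X ∧ ∀ M, M ⊆ X → redModel P X M → M = X

/-- The set of stable models of a program. -/
def SM (P : Program α) : Set (Set α) := {X | StableModel P X}

/-- A program is satisfiable if it has a stable model. -/
def Satisfiable (P : Program α) : Prop := ∃ X, StableModel P X

def Head.clSat (M : Set α) : Head α → Prop
  | .atom a => a ∈ M
  | .choice _ => True
  | .bot => False

/-- `M` is a (classical) model of `P`, reading rules as implications. -/
def IsModel (P : Program α) (M : Set α) : Prop :=
  ∀ r ∈ P, (∀ l ∈ r.body, l.sat M) → r.head.clSat M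

/-- `fixcons X Y = {⊥ ← not x | x ∈ X} ∪ {⊥ ← x | x ∈ Y \ X}`. -/
def fixcons (X Y : Set α) : Program α :=
  {r | (∃ x ∈ X, r = ⟨Head.bot, {Lit.neg x}⟩) ∨ (∃ x ∈ Y \ X, r = ⟨Head.bot, {Lit.pos x}⟩)}

/-- A set of atoms identified with the corresponding facts. -/
def factsOf (X : Set α) : Program α := {r | ∃ x ∈ X, r = ⟨Head.atom x, ∅⟩}

/-- Quantifiers. -/
inductive Quant where
  | ex
  | fa

/-- Satisfiability of a quantified logic program, given by its prefix (a list of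
quantified sets of atoms) and its program. -/
def QLPSat : List (Quant × Set α) → Program α → Prop
  | [], P => Satisfiable P
  | (Quant.ex, X) :: Q, P => ∃ Y, Y ⊆ X ∧ QLPSat Q (P ∪ fixcons Y X)
  | (Quant.fa, X) :: Q, P => ∀ Y, Y ⊆ X → QLPSat Q (P ∪ fixcons Y X)

/-- `r` has head atom `p` (either `p` or `{p}`). -/
def headAtomIs (r : Rule α) (p : α) : Prop :=
  r.head = Head.atom p ∨ r.head = Head.choice p

def posEdge (P : Program α) (p q : α) : Prop :=
  ∃ r ∈ P, headAtomIs r q ∧ Lit.pos p ∈ r.body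

def negEdge (P : Program α) (p q : α) : Prop :=
  ∃ r ∈ P, headAtomIs r q ∧ Lit.neg p ∈ r.body

def depEdge (P : Program α) (p q : α) : Prop := posEdge P p q ∨ negEdge P p q

/-- The dependency graph of `P` has no cycle involving a negative edge. -/
def Stratified (P : Program α) : Prop :=
  ¬ ∃ p q, negEdge P p q ∧ Relation.ReflTransGen (depEdge P) q p

/-- `P` is in GDT form: it is stratified and all its choice rules have the form
`{p} ←` with `p` occurring in the head of no other rule. -/
def GDT (P : Program α) : Prop :=
  Stratified P ∧ ∀ r ∈ P, ∀ p, r.head = Head.choice p →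
    r.body = ∅ ∧ ∀ r' ∈ P, r' ≠ r → ¬ headAtomIs r' p

/-- A clause: a set of literals. -/
abbrev Clause (α : Type u) := Set (Lit α)

/-- A CNF formula: a set of clauses. -/
abbrev CNF (α : Type u) := Set (Clause α)

def clauseSat (M : Set α) (c : Clause α) : Prop := ∃ l ∈ c, l.sat M

def CnfModel (φ : CNF α) (M : Set α) : Prop := ∀ c ∈ φ, clauseSat M c

def CnfSat (φ : CNF α) : Prop := ∃ M, CnfModel φ M

def clauseAtoms (c : Clause α) : Set α := Lit.atomOf '' c

def cnfAtoms (φ : CNF α) : Set α := ⋃ c ∈ φ, clauseAtoms c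

/-- `fixbf X Y = {{p} | p ∈ X} ∪ {{¬p} | p ∈ Y \ X}`. -/
def fixbf (X Y : Set α) : CNF α :=
  {c | (∃ p ∈ X, c = {Lit.pos p}) ∨ (∃ p ∈ Y \ X, c = {Lit.neg p})}

/-- Satisfiability of a QBF in prenex CNF, given by prefix and matrix. -/
def QBFSat : List (Quant × Set α) → CNF α → Prop
  | [], φ => CnfSat φ
  | (Quant.ex, X) :: Q, φ => ∃ Y, Y ⊆ X ∧ QBFSat Q (φ ∪ fixbf Y X)
  | (Quant.fa, X) :: Q, φ => ∀ Y, Y ⊆ X → QBFSat Q (φ ∪ fixbf Y X)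

def mapLit (g : α → β) : Lit α → Lit β
  | .pos a => .pos (g a)
  | .neg a => .neg (g a)

def mapHead (g : α → β) : Head α → Head β
  | .atom a => .atom (g a)
  | .choice a => .choice (g a)
  | .bot => .bot

def mapRule (g : α → β) (r : Rule α) : Rule β :=
  ⟨mapHead g r.head, mapLit g '' r.body⟩

/-- Rename the atoms of a program along `g`. -/
def mapProg (g : α → β) (P : Program α) : Program β := mapRule g '' P

/-- Add the literals in `L` to the body of every rule of `P`. -/
def addBody (L : Set (Lit α)) (P : Program α) : Program α :=
  {r | ∃ r' ∈ P, r = ⟨r'.head, r'.body ∪ L⟩}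

def replBotHead (p : α) : Rule α → Rule α
  | ⟨Head.bot, B⟩ => ⟨Head.atom p, B⟩
  | r => r

/-- Replace `⊥` in the head of every integrity constraint of `P` by the atom `p`. -/
def botTo (p : α) (P : Program α) : Program α := replBotHead p '' P

def choiceRules (P : Program α) : Program α := {r ∈ P | ∃ p, r.head = Head.choice p}

def normalRules (P : Program α) : Program α := {r ∈ P | ∃ p, r.head = Head.atom p}

def constraintRules (P : Program α) : Program α := {r ∈ P | r.head = Head.bot}

end ASP
namespace ASP

open Classical

variable {F : Type u} {A : Type v}

/-- Atoms used in planning descriptions and their encodings. -/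
inductive PAtom (F : Type u) (A : Type v) where
  | flu (f : F)                 -- a fluent `f`
  | fluP (f : F)                -- the primed fluent `f'`
  | act (a : A)                 -- an action atom `a`
  | t (i : ℕ)                   -- `t(i)`
  | action (a : A)              -- `action(a)`
  | h (f : F) (i : ℕ)           -- `h(f,i)`
  | occ (a : A) (i : ℕ)         -- `occ(a,i)`
  | alpha (i : ℕ)               -- `α(i)`
  | obs (i : ℕ)                 -- `obs(true,i)`
  | senses (a : A) (f : F)      -- `senses(a,f)`
  | assm (f : F) (b : Bool)     -- `assume(f,true/false)`
  | assumable (f : F)           -- `assumable(f)`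
  | init (f : F)                -- `init(f)`

def isFlu : PAtom F A → Prop
  | .flu _ => True
  | _ => False

def isDynBody : PAtom F A → Prop
  | .flu _ => True
  | .fluP _ => True
  | .act _ => True
  | _ => False

/-- Dynamic rules: head atoms are fluents, body atoms in `A ∪ F ∪ F'`. -/
def DynRules (DR : Program (PAtom F A)) : Prop :=
  ∀ r ∈ DR, (∀ p, headAtomIs r p → isFlu p) ∧ ∀ l ∈ r.body, isDynBody l.atomOf

/-- Initial rules: all atoms are fluents. -/
def InitRules (IR : Program (PAtom F A)) : Prop :=
  ∀ r ∈ IR, (∀ p, headAtomIs r p → isFlu p) ∧ ∀ l ∈ r.body, isFlu l.atomOf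

/-- Goal rules: integrity constraints whose atoms are fluents. -/
def GoalRules (GR : Program (PAtom F A)) : Prop :=
  ∀ r ∈ GR, r.head = Head.bot ∧ ∀ l ∈ r.body, isFlu l.atomOf

def fluSet (s : Set F) : Set (PAtom F A) := {x | ∃ f ∈ s, x = PAtom.flu f}

def fluPSet (s : Set F) : Set (PAtom F A) := {x | ∃ f ∈ s, x = PAtom.fluP f}

/-- The state `s` represented by the facts `s' = {f' | f ∈ s}`. -/
def stateProg (s : Set F) : Program (PAtom F A) := factsOf (fluPSet s)

def actProg (a : A) : Program (PAtom F A) := {(⟨Head.atom (PAtom.act a), ∅⟩ : Rule (PAtom F A))}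

/-- `DR` is deterministic: `s' ∪ {a} ∪ DR` has at most one stable model. -/
def Deterministic (DR : Program (PAtom F A)) : Prop :=
  ∀ (s : Set F) (a : A), Set.Subsingleton (SM (stateProg s ∪ actProg a ∪ DR))

/-- `DR` is inertial: `SM(s' ∪ DR) = {s' ∪ s}`. -/
def Inertial (DR : Program (PAtom F A)) : Prop :=
  ∀ s : Set F, SM (stateProg s ∪ DR) = {fluPSet s ∪ fluSet s}

/-- The transition function defined by a (deterministic) set of dynamic rules:
`τ(s,a) = M ∩ F` if `s' ∪ {a} ∪ DR` has a single stable model `M`, `⊥` (`none`) otherwise. -/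
noncomputable def tauDR (DR : Program (PAtom F A)) (s : Set F) (a : A) : Option (Set F) :=
  if h : ∃! M, StableModel (stateProg s ∪ actProg a ∪ DR) M then
    some {f | PAtom.flu f ∈ h.choose}
  else none

/-- Extension of a transition function to sets of states (`none` = `⊥`). -/
noncomputable def tauSet (τ : Set F → A → Option (Set F)) (S : Set (Set F)) (a : A) :
    Option (Set (Set F)) :=
  if ∀ s ∈ S, τ s a ≠ none then some {s' | ∃ s ∈ S, τ s a = some s'} else none

/-- Extension of a transition function to sequential plans. -/
noncomputable def tauList (τ : Set F → A → Option (Set F)) :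
    List A → Set (Set F) → Option (Set (Set F))
  | [], S => some S
  | a :: q, S => (tauSet τ S a).bind (tauList τ q)

/-- The states represented by the stable models of `P`. -/
def statesOf (P : Program (PAtom F A)) : Set (Set F) :=
  {s | ∃ M, StableModel P M ∧ s = {f | PAtom.flu f ∈ M}}

def choiceAllFlu (F : Type u) (A : Type v) : Program (PAtom F A) :=
  {r | ∃ f : F, r = ⟨Head.choice (PAtom.flu f), ∅⟩}

/-- The goal states `SM({{f} ← | f ∈ F} ∪ GR)`. -/
def goalStates (GR : Program (PAtom F A)) : Set (Set F) :=
  statesOf (choiceAllFlu F A ∪ GR)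

def renInit : PAtom F A → PAtom F A
  | .flu f => .h f 0
  | x => x

def renDyn (i : ℕ) : PAtom F A → PAtom F A
  | .flu f => .h f i
  | .fluP f => .h f (i - 1)
  | .act a => .occ a i
  | x => x

def renGoal (n : ℕ) : PAtom F A → PAtom F A
  | .flu f => .h f n
  | x => x

def renC1 : PAtom F A → PAtom F A
  | .flu f => .init f
  | x => x

/-- `tt(𝒟_init)`: `IR` with `f` replaced by `h(f,0)`. -/
def ttInit (IR : Program (PAtom F A)) : Program (PAtom F A) := mapProg renInit IR

/-- `tt(𝒟_dyn)` instantiated at time step `i`. -/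
def ttDyn (DR : Program (PAtom F A)) (i : ℕ) : Program (PAtom F A) :=
  addBody {Lit.pos (PAtom.t i)} (mapProg (renDyn i) DR)

/-- `tt(𝒟_goal)`: `GR` with `f` replaced by `h(f,n)`. -/
def ttGoal (GR : Program (PAtom F A)) (n : ℕ) : Program (PAtom F A) := mapProg (renGoal n) GR

/-- `ttt(𝒟_init)`: `⊥` heads replaced by `α(0)`. -/
def tttInit (IR : Program (PAtom F A)) : Program (PAtom F A) :=
  botTo (PAtom.alpha 0) (ttInit IR)

/-- `ttt(𝒟_dyn)` at step `i`: add `not α(i)` to the bodies. -/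
def tttDyn (DR : Program (PAtom F A)) (i : ℕ) : Program (PAtom F A) :=
  addBody {Lit.neg (PAtom.alpha i)} (ttDyn DR i)

/-- `ttt(𝒟_goal)`: add `not α(n)` to the bodies. -/
def tttGoal (GR : Program (PAtom F A)) (n : ℕ) : Program (PAtom F A) :=
  addBody {Lit.neg (PAtom.alpha n)} (ttGoal GR n)

/-- `ttt(𝒟)`, grounded for time steps `1,…,n`. -/
def ttt (DR IR GR : Program (PAtom F A)) (n : ℕ) : Program (PAtom F A) :=
  tttInit IR ∪ (⋃ i ∈ Set.Icc 1 n, tttDyn DR i) ∪ tttGoal GR n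

/-- `Facts = {t(i) | 1 ≤ i ≤ n} ∪ {action(a) | a ∈ A}`. -/
def factsP (F : Type u) (A : Type v) (n : ℕ) : Program (PAtom F A) :=
  {r | (∃ i, 1 ≤ i ∧ i ≤ n ∧ r = ⟨Head.atom (PAtom.t i), ∅⟩) ∨
       (∃ a : A, r = ⟨Head.atom (PAtom.action a), ∅⟩)}

/-- `{occ(A,T) : action(A)} = 1 ← t(T)` instantiated at step `i`, as choice rules
plus at-most-one and at-least-one constraints. -/
def generateAt (F : Type u) (A : Type v) (i : ℕ) : Program (PAtom F A) :=
  {r | (∃ a : A, r = ⟨Head.choice (PAtom.occ a i), {Lit.pos (PAtom.t i)}⟩) ∨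
       (∃ a b : A, a ≠ b ∧ r = ⟨Head.bot, {Lit.pos (PAtom.occ a i), Lit.pos (PAtom.occ b i)}⟩) ∨
       r = ⟨Head.bot, insert (Lit.pos (PAtom.t i)) {l | ∃ a : A, l = Lit.neg (PAtom.occ a i)}⟩}

/-- `{occ(A,T) : action(A)} ≤ 1 ← t(T)` instantiated at step `i`. -/
def generateLeAt (F : Type u) (A : Type v) (i : ℕ) : Program (PAtom F A) :=
  {r | (∃ a : A, r = ⟨Head.choice (PAtom.occ a i), {Lit.pos (PAtom.t i)}⟩) ∨
       (∃ a b : A, a ≠ b ∧ r = ⟨Head.bot, {Lit.pos (PAtom.occ a i), Lit.pos (PAtom.occ b i)}⟩)}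

def generateP (F : Type u) (A : Type v) (n : ℕ) : Program (PAtom F A) :=
  ⋃ i ∈ Set.Icc 1 n, generateAt F A i

def generateLe (F : Type u) (A : Type v) (n : ℕ) : Program (PAtom F A) :=
  ⋃ i ∈ Set.Icc 1 n, generateLeAt F A i

/-- `α(i) ← t(i), α(i−1)`. -/
def alphaAt (F : Type u) (A : Type v) (i : ℕ) : Program (PAtom F A) :=
  {(⟨Head.atom (PAtom.alpha i), {Lit.pos (PAtom.t i), Lit.pos (PAtom.alpha (i - 1))}⟩ :
     Rule (PAtom F A))}

def alphaProg (F : Type u) (A : Type v) (n : ℕ) : Program (PAtom F A) :=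
  ⋃ i ∈ Set.Icc 1 n, alphaAt F A i

/-- `CP = Facts ∪ ttt(𝒟) ∪ Generate ∪ Alpha`. -/
def CP (DR IR GR : Program (PAtom F A)) (n : ℕ) : Program (PAtom F A) :=
  factsP F A n ∪ ttt DR IR GR n ∪ generateP F A n ∪ alphaProg F A n

/-- `CP'[i] = Alpha(i) ∪ Generate(i) ∪ ttt(𝒟_dyn)(i)`. -/
def CPstep (DR : Program (PAtom F A)) (i : ℕ) : Program (PAtom F A) :=
  alphaAt F A i ∪ generateAt F A i ∪ tttDyn DR i

/-- `CP'[0,j] = Facts ∪ ttt(𝒟_init) ∪ ⋃_{i=1}^{j} CP'[i]` (with `Facts` for horizon `n`). -/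
def CPinit (DR IR : Program (PAtom F A)) (n j : ℕ) : Program (PAtom F A) :=
  factsP F A n ∪ tttInit IR ∪ ⋃ i ∈ Set.Icc 1 j, CPstep DR i

/-- `Occ = {occ(a,t) | a ∈ A, 1 ≤ t ≤ n}`. -/
def OccSet (F : Type u) (A : Type v) (n : ℕ) : Set (PAtom F A) :=
  {x | ∃ a : A, ∃ i, 1 ≤ i ∧ i ≤ n ∧ x = PAtom.occ a i}

/-- `Occ_i = {occ(a,i) | a ∈ A}`. -/
def OccAt (F : Type u) (A : Type v) (i : ℕ) : Set (PAtom F A) :=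
  {x | ∃ a : A, x = PAtom.occ a i}

/-- `Open = {h(f,0) | ({h(f,0)} ←) ∈ tt(𝒟_init)}`. -/
def OpenSet (IR : Program (PAtom F A)) : Set (PAtom F A) :=
  {x | ∃ f : F, x = PAtom.h f 0 ∧
       (⟨Head.choice (PAtom.h f 0), ∅⟩ : Rule (PAtom F A)) ∈ ttInit IR}

/-- `Assume = {assume(f,v) | f ∈ As, v ∈ {true,false}}`. -/
def AssumeSet (F : Type u) (A : Type v) (As : Set F) : Set (PAtom F A) :=
  {x | ∃ f ∈ As, ∃ b : Bool, x = PAtom.assm f b}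

/-- `Guess`: the facts `assumable(f)` for `f ∈ As` and the choice rule
`{assume(F,true); assume(F,false)} ≤ 1 ← assumable(F)`. -/
def GuessProg (F : Type u) (A : Type v) (As : Set F) : Program (PAtom F A) :=
  {r | (∃ f ∈ As, r = ⟨Head.atom (PAtom.assumable f), ∅⟩) ∨
       (∃ f : F, ∃ b : Bool, r = ⟨Head.choice (PAtom.assm f b), {Lit.pos (PAtom.assumable f)}⟩) ∨
       (∃ f : F, r = ⟨Head.bot, {Lit.pos (PAtom.assm f true), Lit.pos (PAtom.assm f false)}⟩)}

/-- `C1`: a copy of the initial rules over `init/1` plus the constraints linking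
`init/1` and `assume/2`. -/
def C1Prog (IR : Program (PAtom F A)) : Program (PAtom F A) :=
  mapProg renC1 IR ∪
  {r | ∃ f : F, r = ⟨Head.bot, {Lit.neg (PAtom.init f), Lit.pos (PAtom.assm f true)}⟩} ∪
  {r | ∃ f : F, r = ⟨Head.bot, {Lit.pos (PAtom.init f), Lit.pos (PAtom.assm f false)}⟩}

/-- `C2`: initial states not agreeing with the assumptions are irrelevant. -/
def C2Prog (F : Type u) (A : Type v) : Program (PAtom F A) :=
  {r | (∃ f : F, r = ⟨Head.atom (PAtom.alpha 0),
          {Lit.neg (PAtom.h f 0), Lit.pos (PAtom.assm f true)}⟩) ∨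
       (∃ f : F, r = ⟨Head.atom (PAtom.alpha 0),
          {Lit.pos (PAtom.h f 0), Lit.pos (PAtom.assm f false)}⟩)}

/-- `Facts` for conditional planning, including `senses(a,f)` facts. -/
def factsS (F : Type u) (A : Type v) (sen : A → Option F) (n : ℕ) : Program (PAtom F A) :=
  factsP F A n ∪ {r | ∃ a f, sen a = some f ∧ r = ⟨Head.atom (PAtom.senses a f), ∅⟩}

/-- `{obs(true,T)} ← t(T), T < n`. -/
def obsProg (F : Type u) (A : Type v) (n : ℕ) : Program (PAtom F A) :=
  {r | ∃ i, 1 ≤ i ∧ i < n ∧ r = ⟨Head.choice (PAtom.obs i), {Lit.pos (PAtom.t i)}⟩}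

/-- `α(T) ← t(T), occ(A,T−1), senses(A,F), {h(F,T−1), obs(true,T−1)} = 1`,
with the cardinality constraint expanded into its two cases. -/
def senseProg (F : Type u) (A : Type v) (n : ℕ) : Program (PAtom F A) :=
  {r | ∃ i, 1 ≤ i ∧ i ≤ n ∧ ∃ a : A, ∃ f : F,
    (r = ⟨Head.atom (PAtom.alpha i),
            {Lit.pos (PAtom.t i), Lit.pos (PAtom.occ a (i - 1)), Lit.pos (PAtom.senses a f),
             Lit.pos (PAtom.h f (i - 1)), Lit.neg (PAtom.obs (i - 1))}⟩ ∨
     r = ⟨Head.atom (PAtom.alpha i),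
            {Lit.pos (PAtom.t i), Lit.pos (PAtom.occ a (i - 1)), Lit.pos (PAtom.senses a f),
             Lit.neg (PAtom.h f (i - 1)), Lit.pos (PAtom.obs (i - 1))}⟩)}

/-- `α(T) ← t(T), occ(A,T), {senses(A,F)} = 0, obs(true,T)`, with the cardinality
constraint expressed by the negative literals `not senses(a,f)`. -/
def nonsenseProg (F : Type u) (A : Type v) (n : ℕ) : Program (PAtom F A) :=
  {r | ∃ i, 1 ≤ i ∧ i ≤ n ∧ ∃ a : A,
    r = ⟨Head.atom (PAtom.alpha i),
          {Lit.pos (PAtom.t i), Lit.pos (PAtom.occ a i), Lit.pos (PAtom.obs i)} ∪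
            {l | ∃ f : F, l = Lit.neg (PAtom.senses a f)}⟩}

/-- Conditional plans: the empty plan, `[a;p]` for a non-sensing action, and
`[aᶠ;(p_f,p_¬f)]` for a sensing action. -/
inductive CPlan (F : Type u) (A : Type v) where
  | nil
  | seq (a : A) (p : CPlan F A)
  | branch (a : A) (pt pf : CPlan F A)

def CPlan.length : CPlan F A → ℕ
  | .nil => 0
  | .seq _ p => p.length + 1
  | .branch _ pt pf => max pt.length pf.length + 1

/-- Well-formed plans: `seq` uses non-sensing actions, `branch` sensing actions
(`sen a = some f` means that `a` is a sensing action observing `f`). -/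
def CPlanWF (sen : A → Option F) : CPlan F A → Prop
  | .nil => True
  | .seq a p => sen a = none ∧ CPlanWF sen p
  | .branch a pt pf => (sen a).isSome ∧ CPlanWF sen pt ∧ CPlanWF sen pf

/-- Extension of a transition function to conditional plans. -/
noncomputable def tauCPlan (τ : Set F → A → Option (Set F)) (sen : A → Option F) :
    CPlan F A → Set (Set F) → Option (Set (Set F))
  | .nil, S => some S
  | .seq a p, S => (tauSet τ S a).bind (tauCPlan τ sen p)
  | .branch a pt pf, S =>
    match sen a with
    | none => none
    | some f =>
      match tauSet τ S a with
      | none => none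
      | some S' =>
        match tauCPlan τ sen pt {s ∈ S' | f ∈ s}, tauCPlan τ sen pf {s ∈ S' | f ∉ s} with
        | some T1, some T2 => some (T1 ∪ T2)
        | _, _ => none

/-- The prefix `∃Occ₁ ∀Obs₁ … ∃Occ_{n−1} ∀Obs_{n−1} ∃Occₙ ∀Open`. -/
def condPrefix (IR : Program (PAtom F A)) (n : ℕ) : List (Quant × Set (PAtom F A)) :=
  (((List.range (n - 1)).map fun k =>
      [(Quant.ex, OccAt F A (k + 1)), (Quant.fa, ({PAtom.obs (k + 1)} : Set (PAtom F A)))]).flatten)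
  ++ [(Quant.ex, OccAt F A n), (Quant.fa, OpenSet IR)]

end ASP
namespace ASP

variable {F : Type u} {A : Type v}

/-- The program `X ∪ ⋃_{j=i}^{i+n−1} (CP'[j] ∪ fixcons({occ(a_{j−i+1},j)}, Occ_j))`
for a plan `p = [a₁;…;aₙ]`. -/
def multiStepProg (DR : Program (PAtom F A)) (X : Set (PAtom F A)) (p : List A) (i : ℕ) :
    Program (PAtom F A) :=
  factsOf X ∪ ⋃ k : Fin p.length,
    (CPstep DR (i + k.1) ∪ fixcons {PAtom.occ (p.get k) (i + k.1)} (OccAt F A (i + k.1)))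

end ASP


namespace ASP

universe u' v'

variable {α : Type u'} {β : Type v'}

lemma lit_sat_congr {Z Y : Set α} {l : Lit α} (h : l.atomOf ∈ Z ↔ l.atomOf ∈ Y) :
    l.sat Z ↔ l.sat Y := by
  cases l with
  | pos a => exact h
  | neg a => exact not_congr h

lemma lit_redSat_congr {X₁ M₁ X₂ M₂ : Set α} {l : Lit α}
    (h1 : l.atomOf ∈ X₁ ↔ l.atomOf ∈ X₂) (h2 : l.atomOf ∈ M₁ ↔ l.atomOf ∈ M₂) :
    l.redSat X₁ M₁ ↔ l.redSat X₂ M₂ :=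
  and_congr (lit_sat_congr h1) (lit_sat_congr h2)

lemma head_redSat_congr {X₁ M₁ X₂ M₂ : Set α} {H : Head α}
    (h : ∀ x ∈ H.atoms, (x ∈ X₁ ↔ x ∈ X₂) ∧ (x ∈ M₁ ↔ x ∈ M₂)) :
    H.redSat X₁ M₁ ↔ H.redSat X₂ M₂ := by
  cases H with
  | atom a =>
    have := h a (by simp [Head.atoms])
    simp only [Head.redSat]; rw [this.1, this.2]
  | choice a =>
    have := h a (by simp [Head.atoms])
    simp only [Head.redSat]; rw [this.1, this.2]
  | bot => simp [Head.redSat]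

lemma lit_sat_map {g : α → β} {Z : Set β} {M : Set α} {l : Lit α}
    (h : g l.atomOf ∈ Z ↔ l.atomOf ∈ M) : (mapLit g l).sat Z ↔ l.sat M := by
  cases l with
  | pos a => exact h
  | neg a => exact not_congr h

lemma lit_redSat_map {g : α → β} {Xb Mb : Set β} {X M : Set α} {l : Lit α}
    (h1 : g l.atomOf ∈ Xb ↔ l.atomOf ∈ X) (h2 : g l.atomOf ∈ Mb ↔ l.atomOf ∈ M) :
    (mapLit g l).redSat Xb Mb ↔ l.redSat X M :=
  and_congr (lit_sat_map h1) (lit_sat_map h2)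

lemma head_redSat_map {g : α → β} {Xb Mb : Set β} {X M : Set α} {H : Head α}
    (h : ∀ x ∈ H.atoms, (g x ∈ Xb ↔ x ∈ X) ∧ (g x ∈ Mb ↔ x ∈ M)) :
    (mapHead g H).redSat Xb Mb ↔ H.redSat X M := by
  cases H with
  | atom a =>
    have := h a (by simp [Head.atoms])
    simp only [mapHead, Head.redSat]; rw [this.1, this.2]
  | choice a =>
    have := h a (by simp [Head.atoms])
    simp only [mapHead, Head.redSat]; rw [this.1, this.2]
  | bot => simp [mapHead, Head.redSat]

/-- every atom of a stable model is a head atom -/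
def progHeads (P : Program α) : Set α := ⋃ r ∈ P, r.head.atoms

lemma stable_subset_heads {P : Program α} {X : Set α} (h : StableModel P X) :
    X ⊆ progHeads P := by
  have hred : redModel P X (X ∩ progHeads P) := by
    intro r hr hb
    have hb' : ∀ l ∈ r.body, l.redSat X X := fun l hl => ⟨(hb l hl).1, (hb l hl).1⟩
    have hh := h.1 r hr hb'
    have hmemH : ∀ x ∈ r.head.atoms, x ∈ progHeads P := fun x hx =>
      Set.mem_biUnion hr hx
    cases hH : r.head with
    | atom p =>
      rw [hH] at hh
      exact ⟨hh.1, hh.1, hmemH p (by rw [hH]; simp [Head.atoms])⟩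
    | choice p =>
      rw [hH] at hh
      rcases hh with ⟨h1, _⟩ | ⟨h1, _⟩
      · exact Or.inl ⟨h1, h1, hmemH p (by rw [hH]; simp [Head.atoms])⟩
      · exact Or.inr ⟨h1, fun hc => h1 hc.1⟩
    | bot => rw [hH] at hh; exact hh.elim
  have := h.2 _ Set.inter_subset_left hred
  intro x hx
  have : x ∈ X ∩ progHeads P := by rw [this]; exact hx
  exact this.2

lemma stable_factsOf_iff {X Z : Set α} : StableModel (factsOf X) Z ↔ Z = X := by
  constructor
  · intro h
    have hXZ : X ⊆ Z := by
      intro x hx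
      have hr : (⟨Head.atom x, ∅⟩ : Rule α) ∈ factsOf X := ⟨x, hx, rfl⟩
      have := h.1 _ hr (by intro l hl; exact absurd hl (Set.notMem_empty l))
      exact this.1
    have hred : redModel (factsOf X) Z X := by
      rintro r ⟨x, hx, rfl⟩ _
      exact ⟨hXZ hx, hx⟩
    exact (h.2 X hXZ hred).symm
  · rintro rfl
    constructor
    · rintro r ⟨x, hx, rfl⟩ _
      exact ⟨hx, hx⟩
    · intro M hM hred
      apply Set.Subset.antisymm hM
      intro x hx
      exact (hred _ ⟨x, hx, rfl⟩ (by intro l hl; exact absurd hl (Set.notMem_empty l))).2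


section StepLemmas

variable {F : Type u'} {A : Type v'}

/-- The atoms "new" at step `j`. -/
def NewAt (F : Type u') (A : Type v') (j : ℕ) : Set (PAtom F A) :=
  {x | (∃ b : A, x = PAtom.occ b j) ∨ (∃ f : F, x = PAtom.h f j) ∨ x = PAtom.alpha j}

lemma occ_mem_NewAt {j j' : ℕ} {b : A} : PAtom.occ b j' ∈ NewAt F A j ↔ j' = j := by
  simp [NewAt]

lemma h_mem_NewAt {j j' : ℕ} {f : F} : PAtom.h f j' ∈ NewAt F A j ↔ j' = j := by
  simp [NewAt]

lemma alpha_mem_NewAt {j j' : ℕ} : (PAtom.alpha j' : PAtom F A) ∈ NewAt F A j ↔ j' = j := by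
  simp [NewAt]

lemma t_not_mem_NewAt {j i : ℕ} : (PAtom.t i : PAtom F A) ∉ NewAt F A j := by
  simp [NewAt]

lemma isFlu_iff {x : PAtom F A} : isFlu x ↔ ∃ f : F, x = PAtom.flu f := by
  cases x <;> simp [isFlu]

lemma isDynBody_iff {x : PAtom F A} :
    isDynBody x ↔ (∃ f : F, x = PAtom.flu f) ∨ (∃ f : F, x = PAtom.fluP f) ∨
      (∃ b : A, x = PAtom.act b) := by
  cases x <;> simp [isDynBody]

lemma DR_head_atoms {DR : Program (PAtom F A)} (hDR : DynRules DR) {r : Rule (PAtom F A)}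
    (hr : r ∈ DR) : ∀ x ∈ r.head.atoms, ∃ f : F, x = PAtom.flu f := by
  intro x hx
  cases hH : r.head with
  | atom p =>
    rw [hH] at hx; simp [Head.atoms] at hx; subst hx
    exact isFlu_iff.mp ((hDR r hr).1 x (Or.inl hH))
  | choice p =>
    rw [hH] at hx; simp [Head.atoms] at hx; subst hx
    exact isFlu_iff.mp ((hDR r hr).1 x (Or.inr hH))
  | bot => rw [hH] at hx; simp [Head.atoms] at hx

lemma mem_tttDyn_iff {DR : Program (PAtom F A)} {j : ℕ} {r : Rule (PAtom F A)} :
    r ∈ tttDyn DR j ↔ ∃ r₀ ∈ DR,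
      r = ⟨mapHead (renDyn j) r₀.head,
           mapLit (renDyn j) '' r₀.body ∪ {Lit.pos (PAtom.t j)} ∪ {Lit.neg (PAtom.alpha j)}⟩ := by
  constructor
  · rintro ⟨r1, ⟨r2, ⟨r0, hr0, rfl⟩, rfl⟩, rfl⟩
    exact ⟨r0, hr0, rfl⟩
  · rintro ⟨r0, hr0, rfl⟩
    exact ⟨⟨(mapRule (renDyn j) r0).head, (mapRule (renDyn j) r0).body ∪ {Lit.pos (PAtom.t j)}⟩,
      ⟨mapRule (renDyn j) r0, ⟨r0, hr0, rfl⟩, rfl⟩, rfl⟩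

lemma stable_P0_struct {DR : Program (PAtom F A)} (hDR : DynRules DR) {sPrev : Set F} {a : A}
    {M : Set (PAtom F A)} (hM : StableModel (stateProg sPrev ∪ actProg a ∪ DR) M) :
    (∀ b : A, PAtom.act b ∈ M ↔ b = a) ∧ (∀ f : F, PAtom.fluP f ∈ M ↔ f ∈ sPrev) := by
  have hsub := stable_subset_heads hM
  have hshape : ∀ x ∈ M, (∃ f ∈ sPrev, x = PAtom.fluP f) ∨ x = PAtom.act a ∨
      (∃ f : F, x = PAtom.flu f) := by
    intro x hx
    rcases hsub hx with ⟨S, ⟨r, rfl⟩, hS⟩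
    simp only [Set.mem_iUnion] at hS
    rcases hS with ⟨hr, hx⟩
    rcases hr with (⟨g, ⟨f, hf, rfl⟩, rfl⟩ | hr) | hr
    · simp [Head.atoms] at hx; exact Or.inl ⟨f, hf, hx⟩
    · rcases hr with rfl
      simp [Head.atoms] at hx; exact Or.inr (Or.inl hx)
    · exact Or.inr (Or.inr (DR_head_atoms hDR hr x hx))
  have hemptyb : ∀ l : Lit (PAtom F A), l ∈ (∅ : Set (Lit (PAtom F A))) → l.redSat M M :=
    fun l hl => absurd hl (Set.notMem_empty l)
  constructor
  · intro b
    constructor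
    · intro hb
      rcases hshape _ hb with ⟨f, _, hf⟩ | hf | ⟨f, hf⟩
      · simp at hf
      · simpa using hf
      · simp at hf
    · rintro rfl
      exact (hM.1 _ (Or.inl (Or.inr rfl)) hemptyb).1
  · intro f
    constructor
    · intro hf
      rcases hshape _ hf with ⟨g, hg, hgf⟩ | hgf | ⟨g, hgf⟩
      · cases (by simpa using hgf : f = g); exact hg
      · simp at hgf
      · simp at hgf
    · intro hf
      exact (hM.1 _ (Or.inl (Or.inl ⟨PAtom.fluP f, ⟨f, hf, rfl⟩, rfl⟩)) hemptyb).1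


lemma forall_mem_union_pair {γ : Type*} {B : Set γ} {x y : γ} {Q : γ → Prop} :
    (∀ l ∈ B ∪ {x} ∪ {y}, Q l) ↔ (∀ l ∈ B, Q l) ∧ Q x ∧ Q y := by
  constructor
  · intro h
    exact ⟨fun l hl => h l (Or.inl (Or.inl hl)), h x (Or.inl (Or.inr rfl)), h y (Or.inr rfl)⟩
  · rintro ⟨h1, h2, h3⟩ l hl
    rcases hl with (hl | hl) | hl
    · exact h1 l hl
    · rw [Set.mem_singleton_iff] at hl; subst hl; exact h2
    · rw [Set.mem_singleton_iff] at hl; subst hl; exact h3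

/-- Correspondence between a set of encoding atoms and a set of planning atoms. -/
def CorrPair (j : ℕ) (Z M : Set (PAtom F A)) : Prop :=
  ∀ x : PAtom F A, isDynBody x → (renDyn j x ∈ Z ↔ x ∈ M)

lemma tr_body_redSat {DR : Program (PAtom F A)} (hDR : DynRules DR) {j : ℕ}
    {r₀ : Rule (PAtom F A)} (hr₀ : r₀ ∈ DR) {Z Z' M M' : Set (PAtom F A)}
    (hZM : CorrPair j Z M) (hZM' : CorrPair j Z' M')
    (htZ : PAtom.t j ∈ Z) (htZ' : PAtom.t j ∈ Z')
    (haZ : PAtom.alpha j ∉ Z) (haZ' : PAtom.alpha j ∉ Z') :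
    (∀ l ∈ mapLit (renDyn j) '' r₀.body ∪ {Lit.pos (PAtom.t j)} ∪ {Lit.neg (PAtom.alpha j)},
        l.redSat Z Z') ↔ (∀ l ∈ r₀.body, l.redSat M M') := by
  rw [forall_mem_union_pair, Set.forall_mem_image]
  have h2 : (Lit.pos (PAtom.t j)).redSat Z Z' := ⟨htZ, htZ'⟩
  have h3 : (Lit.neg (PAtom.alpha j)).redSat Z Z' := ⟨haZ, haZ'⟩
  rw [iff_true_intro h2, iff_true_intro h3, and_true, and_true]
  exact forall₂_congr fun l hl =>
    lit_redSat_map (hZM _ ((hDR r₀ hr₀).2 l hl)) (hZM' _ ((hDR r₀ hr₀).2 l hl))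

lemma tr_head_redSat {DR : Program (PAtom F A)} (hDR : DynRules DR) {j : ℕ}
    {r₀ : Rule (PAtom F A)} (hr₀ : r₀ ∈ DR) {Z Z' M M' : Set (PAtom F A)}
    (hZM : CorrPair j Z M) (hZM' : CorrPair j Z' M') :
    (mapHead (renDyn j) r₀.head).redSat Z Z' ↔ r₀.head.redSat M M' := by
  apply head_redSat_map
  intro x hx
  obtain ⟨f, rfl⟩ := DR_head_atoms hDR hr₀ x hx
  exact ⟨hZM _ trivial, hZM' _ trivial⟩

lemma tr_head_atoms_new {DR : Program (PAtom F A)} (hDR : DynRules DR) {j : ℕ}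
    {r₀ : Rule (PAtom F A)} (hr₀ : r₀ ∈ DR) :
    ∀ x ∈ (mapHead (renDyn j) r₀.head).atoms, x ∈ NewAt F A j := by
  intro x hx
  cases hH : r₀.head with
  | atom p =>
    obtain ⟨f, rfl⟩ := isFlu_iff.mp ((hDR r₀ hr₀).1 p (Or.inl hH))
    rw [hH] at hx; simp only [mapHead, Head.atoms, Set.mem_singleton_iff] at hx
    subst hx; exact Or.inr (Or.inl ⟨f, by simp [renDyn]⟩)
  | choice p =>
    obtain ⟨f, rfl⟩ := isFlu_iff.mp ((hDR r₀ hr₀).1 p (Or.inr hH))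
    rw [hH] at hx; simp only [mapHead, Head.atoms, Set.mem_singleton_iff] at hx
    subst hx; exact Or.inr (Or.inl ⟨f, by simp [renDyn]⟩)
  | bot => rw [hH] at hx; simp [mapHead, Head.atoms] at hx

lemma head_redSat_shrink {α : Type*} {H : Head α} {Z W : Set α} (hWZ : W ⊆ Z)
    (hkeep : ∀ x ∈ H.atoms, x ∈ Z → x ∈ W) (h : H.redSat Z Z) : H.redSat Z W := by
  cases H with
  | atom p => exact ⟨h.1, hkeep p (by simp [Head.atoms]) h.1⟩
  | choice p =>
    rcases h with ⟨h1, _⟩ | ⟨h1, _⟩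
    · exact Or.inl ⟨h1, hkeep p (by simp [Head.atoms]) h1⟩
    · exact Or.inr ⟨h1, fun hc => h1 (hWZ hc)⟩
  | bot => exact h.elim

lemma redModel_congr_outside {Qb : Program (PAtom F A)} {j : ℕ}
    (hB : ∀ r ∈ Qb, ∀ l ∈ r.body, l.atomOf ∉ NewAt F A j)
    (hH : ∀ r ∈ Qb, ∀ x ∈ r.head.atoms, x ∉ NewAt F A j)
    {Z₁ M₁ Z₂ M₂ : Set (PAtom F A)}
    (h : ∀ x : PAtom F A, x ∉ NewAt F A j → ((x ∈ Z₁ ↔ x ∈ Z₂) ∧ (x ∈ M₁ ↔ x ∈ M₂))) :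
    redModel Qb Z₁ M₁ ↔ redModel Qb Z₂ M₂ := by
  have key : ∀ r ∈ Qb, ((∀ l ∈ r.body, l.redSat Z₁ M₁) ↔ ∀ l ∈ r.body, l.redSat Z₂ M₂) ∧
      (r.head.redSat Z₁ M₁ ↔ r.head.redSat Z₂ M₂) := by
    intro r hr
    refine ⟨forall₂_congr fun l hl =>
      lit_redSat_congr (h _ (hB r hr l hl)).1 (h _ (hB r hr l hl)).2,
      head_redSat_congr fun x hx => h x (hH r hr x hx)⟩
  constructor
  · intro hm r hr hb; exact ((key r hr).2).mp (hm r hr (((key r hr).1).mpr hb))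
  · intro hm r hr hb; exact ((key r hr).2).mpr (hm r hr (((key r hr).1).mp hb))

lemma mem_stepProg_iff {DR : Program (PAtom F A)} {j : ℕ} {a : A} {r : Rule (PAtom F A)} :
    r ∈ CPstep DR j ∪ fixcons {PAtom.occ a j} (OccAt F A j) ↔
      r = ⟨Head.atom (PAtom.alpha j), {Lit.pos (PAtom.t j), Lit.pos (PAtom.alpha (j-1))}⟩ ∨
      (∃ b : A, r = ⟨Head.choice (PAtom.occ b j), {Lit.pos (PAtom.t j)}⟩) ∨
      (∃ b c : A, b ≠ c ∧
        r = ⟨Head.bot, {Lit.pos (PAtom.occ b j), Lit.pos (PAtom.occ c j)}⟩) ∨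
      r = ⟨Head.bot, insert (Lit.pos (PAtom.t j)) {l | ∃ b : A, l = Lit.neg (PAtom.occ b j)}⟩ ∨
      (∃ r₀ ∈ DR, r = ⟨mapHead (renDyn j) r₀.head,
           mapLit (renDyn j) '' r₀.body ∪ {Lit.pos (PAtom.t j)} ∪ {Lit.neg (PAtom.alpha j)}⟩) ∨
      r = ⟨Head.bot, {Lit.neg (PAtom.occ a j)}⟩ ∨
      (∃ b : A, b ≠ a ∧ r = ⟨Head.bot, {Lit.pos (PAtom.occ b j)}⟩) := by
  constructor
  · rintro (((hr | hr) | hr) | hr)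
    · exact Or.inl hr
    · rcases hr with ⟨b, rfl⟩ | ⟨b, c, hbc, rfl⟩ | rfl
      · exact Or.inr (Or.inl ⟨b, rfl⟩)
      · exact Or.inr (Or.inr (Or.inl ⟨b, c, hbc, rfl⟩))
      · exact Or.inr (Or.inr (Or.inr (Or.inl rfl)))
    · exact Or.inr (Or.inr (Or.inr (Or.inr (Or.inl (mem_tttDyn_iff.mp hr)))))
    · rcases hr with ⟨x, hx, rfl⟩ | ⟨x, hx, rfl⟩
      · rw [Set.mem_singleton_iff] at hx; subst hx
        exact Or.inr (Or.inr (Or.inr (Or.inr (Or.inr (Or.inl rfl)))))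
      · rcases hx with ⟨⟨b, rfl⟩, hne⟩
        refine Or.inr (Or.inr (Or.inr (Or.inr (Or.inr (Or.inr ⟨b, ?_, rfl⟩)))))
        intro hba; exact hne (by rw [hba]; rfl)
  · rintro (rfl | ⟨b, rfl⟩ | ⟨b, c, hbc, rfl⟩ | rfl | ⟨r₀, hr₀, rfl⟩ | rfl | ⟨b, hba, rfl⟩)
    · exact Or.inl (Or.inl (Or.inl rfl))
    · exact Or.inl (Or.inl (Or.inr (Or.inl ⟨b, rfl⟩)))
    · exact Or.inl (Or.inl (Or.inr (Or.inr (Or.inl ⟨b, c, hbc, rfl⟩))))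
    · exact Or.inl (Or.inl (Or.inr (Or.inr (Or.inr rfl))))
    · exact Or.inl (Or.inr (mem_tttDyn_iff.mpr ⟨r₀, hr₀, rfl⟩))
    · exact Or.inr (Or.inl ⟨PAtom.occ a j, rfl, rfl⟩)
    · refine Or.inr (Or.inr ⟨PAtom.occ b j, ⟨⟨b, rfl⟩, ?_⟩, rfl⟩)
      simp only [Set.mem_singleton_iff]
      intro hc; exact hba (by injection hc)


variable {DR : Program (PAtom F A)} {j : ℕ} {a : A}
variable {Qb : Program (PAtom F A)} {Yb : Set (PAtom F A)} {sPrev : Set F}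

/-- The stable model of the one-step extension corresponding to `M`. -/
def ZOf (Yb : Set (PAtom F A)) (j : ℕ) (M : Set (PAtom F A)) : Set (PAtom F A) :=
  Yb ∪ {x | ∃ b : A, PAtom.act b ∈ M ∧ x = PAtom.occ b j}
     ∪ {x | ∃ f : F, PAtom.flu f ∈ M ∧ x = PAtom.h f j}

lemma ZOf_mem_old (hYbNew : ∀ x ∈ Yb, x ∉ NewAt F A j) {M : Set (PAtom F A)} {x : PAtom F A}
    (hx : x ∉ NewAt F A j) : x ∈ ZOf Yb j M ↔ x ∈ Yb := by
  constructor
  · rintro ((h | ⟨b, _, rfl⟩) | ⟨f, _, rfl⟩)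
    · exact h
    · exact absurd (Or.inl ⟨b, rfl⟩) hx
    · exact absurd (Or.inr (Or.inl ⟨f, rfl⟩)) hx
  · exact fun h => Or.inl (Or.inl h)

lemma ZOf_mem_occ (hYbNew : ∀ x ∈ Yb, x ∉ NewAt F A j) {M : Set (PAtom F A)} {b : A} :
    PAtom.occ b j ∈ ZOf Yb j M ↔ PAtom.act b ∈ M := by
  constructor
  · rintro ((h | ⟨c, hc, he⟩) | ⟨f, _, he⟩)
    · exact absurd (Or.inl ⟨b, rfl⟩) (hYbNew _ h)
    · injection he with h1 h2; subst h1; exact hc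
    · exact absurd he (by simp)
  · exact fun h => Or.inl (Or.inr ⟨b, h, rfl⟩)

lemma ZOf_mem_h (hYbNew : ∀ x ∈ Yb, x ∉ NewAt F A j) {M : Set (PAtom F A)} {f : F} :
    PAtom.h f j ∈ ZOf Yb j M ↔ PAtom.flu f ∈ M := by
  constructor
  · rintro ((h | ⟨c, _, he⟩) | ⟨g, hg, he⟩)
    · exact absurd (Or.inr (Or.inl ⟨f, rfl⟩)) (hYbNew _ h)
    · exact absurd he (by simp)
    · injection he with h1 h2; subst h1; exact hg
  · exact fun h => Or.inr ⟨f, h, rfl⟩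

lemma ZOf_alpha_not (hYbNew : ∀ x ∈ Yb, x ∉ NewAt F A j) {M : Set (PAtom F A)} :
    PAtom.alpha j ∉ ZOf Yb j M := by
  rintro ((h | ⟨c, _, he⟩) | ⟨g, _, he⟩)
  · exact absurd (Or.inr (Or.inr rfl)) (hYbNew _ h)
  · exact absurd he (by simp)
  · exact absurd he (by simp)

lemma h_prev_not_new (hj : 1 ≤ j) {f : F} : PAtom.h f (j - 1) ∉ NewAt F A j := by
  rintro (⟨b, hb⟩ | ⟨g, hg⟩ | hg)
  · exact absurd hb (by simp)
  · injection hg with h1 h2; omega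
  · exact absurd hg (by simp)

lemma alpha_prev_not_new (hj : 1 ≤ j) : (PAtom.alpha (j - 1) : PAtom F A) ∉ NewAt F A j := by
  rintro (⟨b, hb⟩ | ⟨g, hg⟩ | hg)
  · exact absurd hb (by simp)
  · exact absurd hg (by simp)
  · injection hg with h1; omega

lemma ZOf_corr (hYbNew : ∀ x ∈ Yb, x ∉ NewAt F A j) (hj : 1 ≤ j)
    (hsPrev : sPrev = {f | PAtom.h f (j - 1) ∈ Yb})
    {M : Set (PAtom F A)} (hMfluP : ∀ f : F, PAtom.fluP f ∈ M ↔ f ∈ sPrev) :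
    CorrPair j (ZOf Yb j M) M := by
  intro x hx
  rcases isDynBody_iff.mp hx with ⟨f, rfl⟩ | ⟨f, rfl⟩ | ⟨b, rfl⟩
  · exact ZOf_mem_h hYbNew
  · show PAtom.h f (j - 1) ∈ ZOf Yb j M ↔ _
    rw [ZOf_mem_old hYbNew (h_prev_not_new hj)]
    constructor
    · intro h; exact (hMfluP f).mpr (by rw [hsPrev]; exact h)
    · intro h; have := (hMfluP f).mp h; rw [hsPrev] at this; exact this
  · exact ZOf_mem_occ hYbNew

lemma step_SM_mpr (hDR : DynRules DR) (hj : 1 ≤ j)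
    (hQbBody : ∀ r ∈ Qb, ∀ l ∈ r.body, l.atomOf ∉ NewAt F A j)
    (hQbHead : ∀ r ∈ Qb, ∀ x ∈ r.head.atoms, x ∉ NewAt F A j)
    (hYstable : StableModel Qb Yb)
    (hYbNew : ∀ x ∈ Yb, x ∉ NewAt F A j)
    (ht : PAtom.t j ∈ Yb) (halb : PAtom.alpha (j - 1) ∉ Yb)
    (hsPrev : sPrev = {f | PAtom.h f (j - 1) ∈ Yb})
    {M : Set (PAtom F A)} (hM : StableModel (stateProg sPrev ∪ actProg a ∪ DR) M) :
    StableModel (Qb ∪ (CPstep DR j ∪ fixcons {PAtom.occ a j} (OccAt F A j))) (ZOf Yb j M) := by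
  obtain ⟨hMact, hMfluP⟩ := stable_P0_struct hDR hM
  set Z := ZOf Yb j M with hZdef
  have hnew : ∀ x, x ∉ NewAt F A j → (x ∈ Z ↔ x ∈ Yb) := fun x hx => ZOf_mem_old hYbNew hx
  have hocc : ∀ b, PAtom.occ b j ∈ Z ↔ b = a :=
    fun b => (ZOf_mem_occ hYbNew).trans (hMact b)
  have hhm : ∀ f, PAtom.h f j ∈ Z ↔ PAtom.flu f ∈ M := fun f => ZOf_mem_h hYbNew
  have halZ : PAtom.alpha j ∉ Z := ZOf_alpha_not hYbNew
  have halZ' : PAtom.alpha (j - 1) ∉ Z := by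
    rw [hnew _ (alpha_prev_not_new hj)]; exact halb
  have htZ : PAtom.t j ∈ Z := Or.inl (Or.inl ht)
  have hcorr : CorrPair j Z M := ZOf_corr hYbNew hj hsPrev hMfluP
  constructor
  · intro r hr
    rcases hr with hr | hr
    · exact ((redModel_congr_outside hQbBody hQbHead
        (fun x hx => ⟨hnew x hx, hnew x hx⟩)).mpr hYstable.1) r hr
    · rcases mem_stepProg_iff.mp hr with rfl | ⟨b, rfl⟩ | ⟨b, c, hbc, rfl⟩ | rfl |
        ⟨r₀, hr₀, rfl⟩ | rfl | ⟨b, hba, rfl⟩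
      · intro hb
        exact absurd ((hb (Lit.pos (PAtom.alpha (j - 1))) (by simp)).1) halZ'
      · intro _
        by_cases hb : PAtom.occ b j ∈ Z
        · exact Or.inl ⟨hb, hb⟩
        · exact Or.inr ⟨hb, hb⟩
      · intro hb
        have h1 : PAtom.occ b j ∈ Z := (hb (Lit.pos (PAtom.occ b j)) (by simp)).1
        have h2 : PAtom.occ c j ∈ Z := (hb (Lit.pos (PAtom.occ c j)) (by simp)).1
        rw [hocc] at h1 h2
        exact absurd (h1.trans h2.symm) hbc
      · intro hb
        exact absurd ((hocc a).mpr rfl)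
          (hb (Lit.neg (PAtom.occ a j)) (Set.mem_insert_iff.mpr (Or.inr ⟨a, rfl⟩))).1
      · intro hb
        exact (tr_head_redSat hDR hr₀ hcorr hcorr).mpr
          (hM.1 r₀ (Or.inr hr₀) ((tr_body_redSat hDR hr₀ hcorr hcorr htZ htZ halZ halZ).mp hb))
      · intro hb
        exact absurd ((hocc a).mpr rfl) (hb (Lit.neg (PAtom.occ a j)) rfl).1
      · intro hb
        exact absurd ((hocc b).mp (hb (Lit.pos (PAtom.occ b j)) rfl).1) hba
  · intro Z' hZ'sub hZ'red
    have hYbZ' : Yb ⊆ Z' := by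
      have hres : redModel Qb Z Z' := fun r hr => hZ'red r (Or.inl hr)
      have hres2 : redModel Qb Yb {x ∈ Z' | x ∉ NewAt F A j} := by
        refine (redModel_congr_outside hQbBody hQbHead ?_).mp hres
        intro x hx
        exact ⟨hnew x hx, by simp [Set.mem_setOf_eq, hx]⟩
      have hsub2 : {x ∈ Z' | x ∉ NewAt F A j} ⊆ Yb := by
        rintro x ⟨hx1, hx2⟩
        exact (hnew x hx2).mp (hZ'sub hx1)
      have heq := hYstable.2 _ hsub2 hres2
      intro x hx
      have : x ∈ {x ∈ Z' | x ∉ NewAt F A j} := by rw [heq]; exact hx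
      exact this.1
    have htZ'' : PAtom.t j ∈ Z' := hYbZ' ht
    have hoccZ' : PAtom.occ a j ∈ Z' := by
      have := hZ'red _ (Or.inr (mem_stepProg_iff.mpr (Or.inr (Or.inl ⟨a, rfl⟩))))
        (by intro l hl; rw [Set.mem_singleton_iff] at hl; subst hl; exact ⟨htZ, htZ''⟩)
      rcases this with ⟨_, h2⟩ | ⟨h1, _⟩
      · exact h2
      · exact absurd ((hocc a).mpr rfl) h1
    have haZ'' : PAtom.alpha j ∉ Z' := fun hc => halZ (hZ'sub hc)
    set M' := {x ∈ M | ¬ ∃ f : F, x = PAtom.flu f} ∪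
              {x | ∃ f : F, PAtom.h f j ∈ Z' ∧ x = PAtom.flu f} with hM'def
    have hM'sub : M' ⊆ M := by
      rintro x (hx | ⟨f, hf, rfl⟩)
      · exact hx.1
      · exact (hhm f).mp (hZ'sub hf)
    have hcorr' : CorrPair j Z' M' := by
      intro x hx
      rcases isDynBody_iff.mp hx with ⟨f, rfl⟩ | ⟨f, rfl⟩ | ⟨b, rfl⟩
      · show PAtom.h f j ∈ Z' ↔ _
        constructor
        · intro hf; exact Or.inr ⟨f, hf, rfl⟩
        · rintro (⟨_, hne⟩ | ⟨g, hg, hfg⟩)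
          · exact absurd ⟨f, rfl⟩ hne
          · injection hfg with h1; subst h1; exact hg
      · show PAtom.h f (j - 1) ∈ Z' ↔ _
        constructor
        · intro hf
          have hfY : PAtom.h f (j - 1) ∈ Yb := (hnew _ (h_prev_not_new hj)).mp (hZ'sub hf)
          refine Or.inl ⟨(hMfluP f).mpr (by rw [hsPrev]; exact hfY), by simp⟩
        · rintro (⟨hf, _⟩ | ⟨g, _, hfg⟩)
          · have := (hMfluP f).mp hf
            rw [hsPrev] at this
            exact hYbZ' this
          · exact absurd hfg (by simp)
      · show PAtom.occ b j ∈ Z' ↔ _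
        constructor
        · intro hf
          exact Or.inl ⟨(hMact b).mpr ((hocc b).mp (hZ'sub hf)), by simp⟩
        · rintro (⟨hf, _⟩ | ⟨g, _, hfg⟩)
          · rw [(hMact b).mp hf]; exact hoccZ'
          · exact absurd hfg (by simp)
    have hM'red : redModel (stateProg sPrev ∪ actProg a ∪ DR) M M' := by
      rintro r ((hr | hr) | hr)
      · rintro -
        obtain ⟨x, ⟨f, hf, rfl⟩, rfl⟩ := hr
        exact ⟨(hMfluP f).mpr hf, Or.inl ⟨(hMfluP f).mpr hf, by simp⟩⟩
      · obtain rfl : r = ⟨Head.atom (PAtom.act a), ∅⟩ := hr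
        exact fun _ => ⟨(hMact a).mpr rfl, Or.inl ⟨(hMact a).mpr rfl, by simp⟩⟩
      · intro hb
        exact (tr_head_redSat hDR hr hcorr hcorr').mp
          (hZ'red _ (Or.inr (mem_stepProg_iff.mpr
              (Or.inr (Or.inr (Or.inr (Or.inr (Or.inl ⟨r, hr, rfl⟩)))))))
            ((tr_body_redSat hDR hr hcorr hcorr' htZ htZ'' halZ haZ'').mpr hb))
    have hM'eq := hM.2 M' hM'sub hM'red
    have hZsub : Z ⊆ Z' := by
      rintro x ((hx | ⟨b, hb, rfl⟩) | ⟨f, hf, rfl⟩)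
      · exact hYbZ' hx
      · rw [(hMact b).mp hb]; exact hoccZ'
      · have hfM' : PAtom.flu f ∈ M' := by rw [hM'eq]; exact hf
        rcases hfM' with ⟨_, hne⟩ | ⟨g, hg, hfg⟩
        · exact absurd ⟨f, rfl⟩ hne
        · injection hfg with h1; subst h1; exact hg
    exact Set.Subset.antisymm hZ'sub hZsub


lemma tr_head_atoms_h {DR : Program (PAtom F A)} (hDR : DynRules DR) {j : ℕ}
    {r₀ : Rule (PAtom F A)} (hr₀ : r₀ ∈ DR) :
    ∀ x ∈ (mapHead (renDyn j) r₀.head).atoms, ∃ f : F, x = PAtom.h f j := by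
  intro x hx
  cases hH : r₀.head with
  | atom p =>
    obtain ⟨f, rfl⟩ := isFlu_iff.mp ((hDR r₀ hr₀).1 p (Or.inl hH))
    rw [hH] at hx; simp only [mapHead, Head.atoms, Set.mem_singleton_iff] at hx
    exact ⟨f, hx⟩
  | choice p =>
    obtain ⟨f, rfl⟩ := isFlu_iff.mp ((hDR r₀ hr₀).1 p (Or.inr hH))
    rw [hH] at hx; simp only [mapHead, Head.atoms, Set.mem_singleton_iff] at hx
    exact ⟨f, hx⟩
  | bot => rw [hH] at hx; simp [mapHead, Head.atoms] at hx

lemma step_SM_mp (hDR : DynRules DR) (hj : 1 ≤ j)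
    (hQbBody : ∀ r ∈ Qb, ∀ l ∈ r.body, l.atomOf ∉ NewAt F A j)
    (hQbHead : ∀ r ∈ Qb, ∀ x ∈ r.head.atoms, x ∉ NewAt F A j)
    (hSM : ∀ W, StableModel Qb W ↔ W = Yb)
    (hYbNew : ∀ x ∈ Yb, x ∉ NewAt F A j)
    (ht : PAtom.t j ∈ Yb) (halb : PAtom.alpha (j - 1) ∉ Yb)
    (hsPrev : sPrev = {f | PAtom.h f (j - 1) ∈ Yb})
    {Z : Set (PAtom F A)}
    (hZ : StableModel (Qb ∪ (CPstep DR j ∪ fixcons {PAtom.occ a j} (OccAt F A j))) Z) :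
    ∃ M, StableModel (stateProg sPrev ∪ actProg a ∪ DR) M ∧ Z = ZOf Yb j M := by
  have hYstable : StableModel Qb Yb := (hSM Yb).mpr rfl
  have hocca : PAtom.occ a j ∈ Z := by
    by_contra hc
    exact hZ.1 _ (Or.inr (mem_stepProg_iff.mpr
        (Or.inr (Or.inr (Or.inr (Or.inr (Or.inr (Or.inl rfl))))))))
      (by intro l hl; obtain rfl : l = Lit.neg (PAtom.occ a j) := hl; exact ⟨hc, hc⟩)
  have hoccb : ∀ b : A, b ≠ a → PAtom.occ b j ∉ Z := by
    intro b hba hc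
    exact hZ.1 _ (Or.inr (mem_stepProg_iff.mpr
        (Or.inr (Or.inr (Or.inr (Or.inr (Or.inr (Or.inr ⟨b, hba, rfl⟩))))))))
      (by intro l hl; obtain rfl : l = Lit.pos (PAtom.occ b j) := hl; exact ⟨hc, hc⟩)
  set Zb := {x ∈ Z | x ∉ NewAt F A j} with hZbdef
  have hZbsub : ∀ x, x ∉ NewAt F A j → (x ∈ Z ↔ x ∈ Zb) :=
    fun x hx => ⟨fun h => ⟨h, hx⟩, fun h => h.1⟩
  have hSheads : ∀ r ∈ CPstep DR j ∪ fixcons {PAtom.occ a j} (OccAt F A j),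
      ∀ x ∈ r.head.atoms, x ∈ NewAt F A j := by
    intro r hr
    rcases mem_stepProg_iff.mp hr with rfl | ⟨b, rfl⟩ | ⟨b, c, hbc, rfl⟩ | rfl |
      ⟨r₀, hr₀, rfl⟩ | rfl | ⟨b, hba, rfl⟩
    · intro x hx; obtain rfl : x = PAtom.alpha j := hx; exact Or.inr (Or.inr rfl)
    · intro x hx; obtain rfl : x = PAtom.occ b j := hx; exact Or.inl ⟨b, rfl⟩
    · intro x hx; exact absurd hx (by simp [Head.atoms])
    · intro x hx; exact absurd hx (by simp [Head.atoms])
    · intro x hx; exact tr_head_atoms_new hDR hr₀ x hx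
    · intro x hx; exact absurd hx (by simp [Head.atoms])
    · intro x hx; exact absurd hx (by simp [Head.atoms])
  have hZbstable : StableModel Qb Zb := by
    constructor
    · exact (redModel_congr_outside hQbBody hQbHead
        (fun x hx => ⟨hZbsub x hx, hZbsub x hx⟩)).mp (fun r hr => hZ.1 r (Or.inl hr))
    · intro M₀ hM₀sub hM₀red
      set W := M₀ ∪ {x ∈ Z | x ∈ NewAt F A j} with hWdef
      have hWZ : W ⊆ Z := by
        rintro x (hx | hx)
        · exact (hM₀sub hx).1
        · exact hx.1
      have hWred : redModel (Qb ∪ (CPstep DR j ∪ fixcons {PAtom.occ a j} (OccAt F A j))) Z W := by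
        rintro r (hr | hr)
        · refine ((redModel_congr_outside hQbBody hQbHead ?_).mp hM₀red) r hr
          intro x hx
          refine ⟨(hZbsub x hx).symm, ⟨fun h => Or.inl h, ?_⟩⟩
          rintro (h | h)
          · exact h
          · exact absurd h.2 hx
        · intro hb
          have hbZ : ∀ l ∈ r.body, l.redSat Z Z := fun l hl => ⟨(hb l hl).1, (hb l hl).1⟩
          exact head_redSat_shrink hWZ (fun x hx hxZ => Or.inr ⟨hxZ, hSheads r hr x hx⟩)
            (hZ.1 r (Or.inr hr) hbZ)
      have hWeq := hZ.2 W hWZ hWred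
      apply Set.Subset.antisymm hM₀sub
      rintro x ⟨hx1, hx2⟩
      have hxW : x ∈ W := by rw [hWeq]; exact hx1
      rcases hxW with h | h
      · exact h
      · exact absurd h.2 hx2
  have hZbYb : Zb = Yb := (hSM Zb).mp hZbstable
  have hYbZ : Yb ⊆ Z := by
    intro x hx
    rw [← hZbYb] at hx
    exact hx.1
  have hnewZ : ∀ x, x ∉ NewAt F A j → (x ∈ Z ↔ x ∈ Yb) :=
    fun x hx => (hZbsub x hx).trans (by rw [hZbYb])
  have htZ : PAtom.t j ∈ Z := hYbZ ht
  have halZ' : PAtom.alpha (j - 1) ∉ Z :=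
    fun hc => halb ((hnewZ _ (alpha_prev_not_new hj)).mp hc)
  have halZ : PAtom.alpha j ∉ Z := by
    intro hc
    have hWZ : Z \ {PAtom.alpha j} ⊆ Z := Set.diff_subset
    have hWred : redModel (Qb ∪ (CPstep DR j ∪ fixcons {PAtom.occ a j} (OccAt F A j)))
        Z (Z \ {PAtom.alpha j}) := by
      rintro r (hr | hr)
      · intro hb
        have hbZ : ∀ l ∈ r.body, l.redSat Z Z := fun l hl => ⟨(hb l hl).1, (hb l hl).1⟩
        refine head_redSat_shrink hWZ (fun x hx hxZ => ⟨hxZ, fun hxa => ?_⟩)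
          (hZ.1 r (Or.inl hr) hbZ)
        obtain rfl : x = PAtom.alpha j := hxa
        exact hQbHead r hr _ hx (Or.inr (Or.inr rfl))
      · by_cases hra : r = ⟨Head.atom (PAtom.alpha j),
            {Lit.pos (PAtom.t j), Lit.pos (PAtom.alpha (j - 1))}⟩
        · subst hra
          intro hb
          exact absurd ((hb (Lit.pos (PAtom.alpha (j - 1))) (by simp)).1 :
            PAtom.alpha (j - 1) ∈ Z) halZ'
        · intro hb
          have hbZ : ∀ l ∈ r.body, l.redSat Z Z := fun l hl => ⟨(hb l hl).1, (hb l hl).1⟩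
          refine head_redSat_shrink hWZ (fun x hx hxZ => ⟨hxZ, fun hxa => ?_⟩)
            (hZ.1 r (Or.inr hr) hbZ)
          obtain rfl : x = PAtom.alpha j := hxa
          rcases mem_stepProg_iff.mp hr with h' | ⟨b, h'⟩ | ⟨b, c, hbc, h'⟩ | h' |
            ⟨r₀, hr₀, h'⟩ | h' | ⟨b, hba, h'⟩
          · exact hra h'
          · subst h'; exact absurd hx (by simp [Head.atoms])
          · subst h'; exact absurd hx (by simp [Head.atoms])
          · subst h'; exact absurd hx (by simp [Head.atoms])
          · subst h'
            obtain ⟨f, hf⟩ := tr_head_atoms_h hDR hr₀ _ hx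
            exact absurd hf (by simp)
          · subst h'; exact absurd hx (by simp [Head.atoms])
          · subst h'; exact absurd hx (by simp [Head.atoms])
    have hWeq := hZ.2 _ hWZ hWred
    have : PAtom.alpha j ∈ Z \ {PAtom.alpha j} := by rw [hWeq]; exact hc
    exact this.2 rfl
  set M := {x | ∃ f ∈ sPrev, x = PAtom.fluP f} ∪ {PAtom.act a} ∪
           {x | ∃ f : F, PAtom.h f j ∈ Z ∧ x = PAtom.flu f} with hMdef
  have hMact : ∀ b : A, PAtom.act b ∈ M ↔ b = a := by
    intro b
    constructor
    · rintro ((⟨f, _, he⟩ | he) | ⟨f, _, he⟩)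
      · exact absurd he (by simp)
      · have he' : PAtom.act b = PAtom.act a := he
        injection he' with h1
      · exact absurd he (by simp)
    · rintro rfl; exact Or.inl (Or.inr rfl)
  have hMfluP : ∀ f : F, PAtom.fluP f ∈ M ↔ f ∈ sPrev := by
    intro f
    constructor
    · rintro ((⟨g, hg, he⟩ | he) | ⟨g, _, he⟩)
      · injection he with h1; subst h1; exact hg
      · exact absurd (he : PAtom.fluP f = PAtom.act a) (by simp)
      · exact absurd he (by simp)
    · intro hf; exact Or.inl (Or.inl ⟨f, hf, rfl⟩)
  have hMflu : ∀ f : F, PAtom.flu f ∈ M ↔ PAtom.h f j ∈ Z := by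
    intro f
    constructor
    · rintro ((⟨g, _, he⟩ | he) | ⟨g, hg, he⟩)
      · exact absurd he (by simp)
      · exact absurd (he : PAtom.flu f = PAtom.act a) (by simp)
      · injection he with h1; subst h1; exact hg
    · intro hf; exact Or.inr ⟨f, hf, rfl⟩
  have hcorr : CorrPair j Z M := by
    intro x hx
    rcases isDynBody_iff.mp hx with ⟨f, rfl⟩ | ⟨f, rfl⟩ | ⟨b, rfl⟩
    · exact (hMflu f).symm
    · show PAtom.h f (j - 1) ∈ Z ↔ _
      rw [hnewZ _ (h_prev_not_new hj), hMfluP]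
      rw [hsPrev]
      rfl
    · show PAtom.occ b j ∈ Z ↔ _
      rw [hMact]
      constructor
      · intro hb; by_contra hc; exact hoccb b hc hb
      · rintro rfl; exact hocca
  have hMstable : StableModel (stateProg sPrev ∪ actProg a ∪ DR) M := by
    constructor
    · rintro r ((hr | hr) | hr)
      · rintro -
        obtain ⟨x, ⟨f, hf, rfl⟩, rfl⟩ := hr
        exact ⟨(hMfluP f).mpr hf, (hMfluP f).mpr hf⟩
      · obtain rfl : r = ⟨Head.atom (PAtom.act a), ∅⟩ := hr
        exact fun _ => ⟨(hMact a).mpr rfl, (hMact a).mpr rfl⟩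
      · intro hb
        exact (tr_head_redSat hDR hr hcorr hcorr).mp
          (hZ.1 _ (Or.inr (mem_stepProg_iff.mpr
              (Or.inr (Or.inr (Or.inr (Or.inr (Or.inl ⟨r, hr, rfl⟩)))))))
            ((tr_body_redSat hDR hr hcorr hcorr htZ htZ halZ halZ).mpr hb))
    · intro M' hM'sub hM'red
      have hemptyb : ∀ l : Lit (PAtom F A), l ∈ (∅ : Set (Lit (PAtom F A))) → l.redSat M M' :=
        fun l hl => absurd hl (Set.notMem_empty l)
      have hactM' : PAtom.act a ∈ M' :=
        (hM'red _ (Or.inl (Or.inr rfl)) hemptyb).2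
      have hfluPM' : ∀ f ∈ sPrev, PAtom.fluP f ∈ M' := fun f hf =>
        (hM'red _ (Or.inl (Or.inl ⟨PAtom.fluP f, ⟨f, hf, rfl⟩, rfl⟩)) hemptyb).2
      set Z' := Yb ∪ {PAtom.occ a j} ∪ {x | ∃ f : F, PAtom.flu f ∈ M' ∧ x = PAtom.h f j}
        with hZ'def
      have hZ'sub : Z' ⊆ Z := by
        rintro x ((hx | hx) | ⟨f, hf, rfl⟩)
        · exact hYbZ hx
        · obtain rfl : x = PAtom.occ a j := hx; exact hocca
        · exact (hMflu f).mp (hM'sub hf)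
      have hZ'old : ∀ x, x ∉ NewAt F A j → (x ∈ Z' ↔ x ∈ Yb) := by
        intro x hx
        constructor
        · rintro ((h | h) | ⟨f, _, rfl⟩)
          · exact h
          · obtain rfl : x = PAtom.occ a j := h
            exact absurd (Or.inl ⟨a, rfl⟩) hx
          · exact absurd (Or.inr (Or.inl ⟨f, rfl⟩)) hx
        · exact fun h => Or.inl (Or.inl h)
      have hZ'occ : ∀ b : A, PAtom.occ b j ∈ Z' ↔ b = a := by
        intro b
        constructor
        · rintro ((h | h) | ⟨f, _, he⟩)
          · exact absurd (Or.inl ⟨b, rfl⟩) (hYbNew _ h)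
          · have he' : PAtom.occ b j = PAtom.occ a j := h
            injection he' with h1 h2
          · exact absurd he (by simp)
        · rintro rfl; exact Or.inl (Or.inr rfl)
      have hZ'h : ∀ f : F, PAtom.h f j ∈ Z' ↔ PAtom.flu f ∈ M' := by
        intro f
        constructor
        · rintro ((h | h) | ⟨g, hg, he⟩)
          · exact absurd (Or.inr (Or.inl ⟨f, rfl⟩)) (hYbNew _ h)
          · exact absurd (h : PAtom.h f j = PAtom.occ a j) (by simp)
          · injection he with h1 h2; subst h1; exact hg
        · intro hf; exact Or.inr ⟨f, hf, rfl⟩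
      have htZ'' : PAtom.t j ∈ Z' := Or.inl (Or.inl ht)
      have haZ'' : PAtom.alpha j ∉ Z' := fun hc => halZ (hZ'sub hc)
      have hcorr' : CorrPair j Z' M' := by
        intro x hx
        rcases isDynBody_iff.mp hx with ⟨f, rfl⟩ | ⟨f, rfl⟩ | ⟨b, rfl⟩
        · exact hZ'h f
        · show PAtom.h f (j - 1) ∈ Z' ↔ _
          rw [hZ'old _ (h_prev_not_new hj)]
          constructor
          · intro hf
            apply hfluPM'
            rw [hsPrev]; exact hf
          · intro hf
            have := (hMfluP f).mp (hM'sub hf)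
            rw [hsPrev] at this; exact this
        · show PAtom.occ b j ∈ Z' ↔ _
          rw [hZ'occ]
          constructor
          · rintro rfl; exact hactM'
          · intro hb; exact (hMact b).mp (hM'sub hb)
      have hZ'red : redModel (Qb ∪ (CPstep DR j ∪ fixcons {PAtom.occ a j} (OccAt F A j)))
          Z Z' := by
        rintro r (hr | hr)
        · exact ((redModel_congr_outside hQbBody hQbHead
            (fun x hx => ⟨hnewZ x hx, hZ'old x hx⟩)).mpr hYstable.1) r hr
        · rcases mem_stepProg_iff.mp hr with rfl | ⟨b, rfl⟩ | ⟨b, c, hbc, rfl⟩ | rfl |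
            ⟨r₀, hr₀, rfl⟩ | rfl | ⟨b, hba, rfl⟩
          · intro hb
            exact absurd ((hb (Lit.pos (PAtom.alpha (j - 1))) (by simp)).1 :
              PAtom.alpha (j - 1) ∈ Z) halZ'
          · intro _
            by_cases hba : b = a
            · exact Or.inl ⟨by rw [hba]; exact hocca, by rw [hba]; exact (hZ'occ a).mpr rfl⟩
            · exact Or.inr ⟨hoccb b hba, fun hc => hba ((hZ'occ b).mp hc)⟩
          · intro hb
            have h1 : PAtom.occ b j ∈ Z := (hb (Lit.pos (PAtom.occ b j)) (by simp)).1
            have h2 : PAtom.occ c j ∈ Z := (hb (Lit.pos (PAtom.occ c j)) (by simp)).1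
            have hb' : b = a := by by_contra hcon; exact hoccb b hcon h1
            have hc' : c = a := by by_contra hcon; exact hoccb c hcon h2
            exact absurd (hb'.trans hc'.symm) hbc
          · intro hb
            exact absurd hocca
              (hb (Lit.neg (PAtom.occ a j)) (Set.mem_insert_iff.mpr (Or.inr ⟨a, rfl⟩))).1
          · intro hb
            exact (tr_head_redSat hDR hr₀ hcorr hcorr').mpr
              (hM'red r₀ (Or.inr hr₀)
                ((tr_body_redSat hDR hr₀ hcorr hcorr' htZ htZ'' halZ haZ'').mp hb))
          · intro hb
            exact absurd hocca (hb (Lit.neg (PAtom.occ a j)) rfl).1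
          · intro hb
            exact absurd ((hb (Lit.pos (PAtom.occ b j)) rfl).1 : PAtom.occ b j ∈ Z)
              (hoccb b hba)
      have hZ'eq := hZ.2 Z' hZ'sub hZ'red
      apply Set.Subset.antisymm hM'sub
      rintro x ((⟨f, hf, rfl⟩ | hx) | ⟨f, hf, rfl⟩)
      · exact hfluPM' f hf
      · obtain rfl : x = PAtom.act a := hx; exact hactM'
      · have : PAtom.h f j ∈ Z' := by rw [hZ'eq]; exact hf
        exact (hZ'h f).mp this
  refine ⟨M, hMstable, ?_⟩
  ext x
  constructor
  · intro hx
    by_cases hnx : x ∈ NewAt F A j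
    · rcases hnx with ⟨b, rfl⟩ | ⟨f, rfl⟩ | rfl
      · have hba : b = a := by by_contra hc; exact hoccb b hc hx
        exact Or.inl (Or.inr ⟨b, (hMact b).mpr hba, rfl⟩)
      · exact Or.inr ⟨f, (hMflu f).mpr hx, rfl⟩
      · exact absurd hx halZ
    · exact Or.inl (Or.inl ((hnewZ x hnx).mp hx))
  · rintro ((hx | ⟨b, hb, rfl⟩) | ⟨f, hf, rfl⟩)
    · exact hYbZ hx
    · rw [(hMact b).mp hb]; exact hocca
    · exact (hMflu f).mp hf


lemma mem_NewAt_elim {x : PAtom F A} {k j' : ℕ} (h : x ∈ NewAt F A k) (hne : k ≠ j') :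
    x ∉ NewAt F A j' := by
  rcases h with ⟨b, rfl⟩ | ⟨f, rfl⟩ | rfl
  · rw [occ_mem_NewAt]; exact hne
  · rw [h_mem_NewAt]; exact hne
  · rw [alpha_mem_NewAt]; exact hne

lemma atomOf_mapLit {α β : Type*} {g : α → β} (l : Lit α) :
    (mapLit g l).atomOf = g l.atomOf := by cases l <;> rfl

lemma stepProg_head_new {DR : Program (PAtom F A)} (hDR : DynRules DR) {k : ℕ} {b : A} :
    ∀ r ∈ CPstep DR k ∪ fixcons {PAtom.occ b k} (OccAt F A k),
      ∀ x ∈ r.head.atoms, x ∈ NewAt F A k := by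
  intro r hr
  rcases mem_stepProg_iff.mp hr with rfl | ⟨c, rfl⟩ | ⟨c, d, hcd, rfl⟩ | rfl |
    ⟨r₀, hr₀, rfl⟩ | rfl | ⟨c, hca, rfl⟩
  · intro x hx; obtain rfl : x = PAtom.alpha k := hx; exact Or.inr (Or.inr rfl)
  · intro x hx; obtain rfl : x = PAtom.occ c k := hx; exact Or.inl ⟨c, rfl⟩
  · intro x hx; exact absurd hx (by simp [Head.atoms])
  · intro x hx; exact absurd hx (by simp [Head.atoms])
  · intro x hx; exact tr_head_atoms_new hDR hr₀ x hx
  · intro x hx; exact absurd hx (by simp [Head.atoms])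
  · intro x hx; exact absurd hx (by simp [Head.atoms])

lemma stepProg_body_old {DR : Program (PAtom F A)} (hDR : DynRules DR) {k j' : ℕ}
    (hk : 1 ≤ k) (hkj : k < j') {b : A} :
    ∀ r ∈ CPstep DR k ∪ fixcons {PAtom.occ b k} (OccAt F A k),
      ∀ l ∈ r.body, l.atomOf ∉ NewAt F A j' := by
  intro r hr l hl
  rcases mem_stepProg_iff.mp hr with rfl | ⟨c, rfl⟩ | ⟨c, d, hcd, rfl⟩ | rfl |
    ⟨r₀, hr₀, rfl⟩ | rfl | ⟨c, hca, rfl⟩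
  · rw [Set.mem_insert_iff] at hl
    rcases hl with rfl | hl
    · exact t_not_mem_NewAt
    · rw [Set.mem_singleton_iff] at hl; subst hl
      rw [show (Lit.pos (PAtom.alpha (k - 1))).atomOf = PAtom.alpha (k - 1) from rfl,
        alpha_mem_NewAt]
      omega
  · rw [Set.mem_singleton_iff] at hl; subst hl
    exact t_not_mem_NewAt
  · rw [Set.mem_insert_iff] at hl
    rcases hl with rfl | hl
    · rw [show (Lit.pos (PAtom.occ c k)).atomOf = PAtom.occ c k from rfl, occ_mem_NewAt]
      omega
    · rw [Set.mem_singleton_iff] at hl; subst hl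
      rw [show (Lit.pos (PAtom.occ d k)).atomOf = PAtom.occ d k from rfl, occ_mem_NewAt]
      omega
  · rw [Set.mem_insert_iff] at hl
    rcases hl with rfl | ⟨c, rfl⟩
    · exact t_not_mem_NewAt
    · rw [show (Lit.neg (PAtom.occ c k)).atomOf = PAtom.occ c k from rfl, occ_mem_NewAt]
      omega
  · rcases hl with (⟨l₀, hl₀, rfl⟩ | hl) | hl
    · rw [atomOf_mapLit]
      rcases isDynBody_iff.mp ((hDR r₀ hr₀).2 l₀ hl₀) with ⟨f, hf⟩ | ⟨f, hf⟩ | ⟨c, hf⟩ <;>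
        rw [hf]
      · rw [show renDyn k (PAtom.flu f) = PAtom.h f k from rfl, h_mem_NewAt]; omega
      · rw [show renDyn k (PAtom.fluP f) = PAtom.h f (k - 1) from rfl, h_mem_NewAt]; omega
      · rw [show renDyn k (PAtom.act c) = PAtom.occ c k from rfl, occ_mem_NewAt]; omega
    · rw [Set.mem_singleton_iff] at hl; subst hl
      exact t_not_mem_NewAt
    · rw [Set.mem_singleton_iff] at hl; subst hl
      rw [show (Lit.neg (PAtom.alpha k)).atomOf = PAtom.alpha k from rfl, alpha_mem_NewAt]
      omega
  · rw [Set.mem_singleton_iff] at hl; subst hl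
    rw [show (Lit.neg (PAtom.occ b k)).atomOf = PAtom.occ b k from rfl, occ_mem_NewAt]
    omega
  · rw [Set.mem_singleton_iff] at hl; subst hl
    rw [show (Lit.pos (PAtom.occ c k)).atomOf = PAtom.occ c k from rfl, occ_mem_NewAt]
    omega

/-- Restriction of a stable model of the one-step extension to the old atoms. -/
lemma step_restrict_stable (hDR : DynRules DR)
    (hQbBody : ∀ r ∈ Qb, ∀ l ∈ r.body, l.atomOf ∉ NewAt F A j)
    (hQbHead : ∀ r ∈ Qb, ∀ x ∈ r.head.atoms, x ∉ NewAt F A j)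
    {Z : Set (PAtom F A)}
    (hZ : StableModel (Qb ∪ (CPstep DR j ∪ fixcons {PAtom.occ a j} (OccAt F A j))) Z) :
    StableModel Qb {x ∈ Z | x ∉ NewAt F A j} := by
  have hZbsub : ∀ x, x ∉ NewAt F A j → (x ∈ Z ↔ x ∈ {x ∈ Z | x ∉ NewAt F A j}) :=
    fun x hx => ⟨fun h => ⟨h, hx⟩, fun h => h.1⟩
  constructor
  · exact (redModel_congr_outside hQbBody hQbHead
      (fun x hx => ⟨hZbsub x hx, hZbsub x hx⟩)).mp (fun r hr => hZ.1 r (Or.inl hr))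
  · intro M₀ hM₀sub hM₀red
    have hWZ : M₀ ∪ {x ∈ Z | x ∈ NewAt F A j} ⊆ Z := by
      rintro x (hx | hx)
      · exact (hM₀sub hx).1
      · exact hx.1
    have hWred : redModel (Qb ∪ (CPstep DR j ∪ fixcons {PAtom.occ a j} (OccAt F A j))) Z
        (M₀ ∪ {x ∈ Z | x ∈ NewAt F A j}) := by
      rintro r (hr | hr)
      · refine ((redModel_congr_outside hQbBody hQbHead ?_).mp hM₀red) r hr
        intro x hx
        refine ⟨(hZbsub x hx).symm, ⟨fun h => Or.inl h, ?_⟩⟩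
        rintro (h | h)
        · exact h
        · exact absurd h.2 hx
      · intro hb
        have hbZ : ∀ l ∈ r.body, l.redSat Z Z := fun l hl => ⟨(hb l hl).1, (hb l hl).1⟩
        exact head_redSat_shrink hWZ
          (fun x hx hxZ => Or.inr ⟨hxZ, stepProg_head_new hDR r hr x hx⟩)
          (hZ.1 r (Or.inr hr) hbZ)
    have hWeq := hZ.2 _ hWZ hWred
    apply Set.Subset.antisymm hM₀sub
    rintro x ⟨hx1, hx2⟩
    have hxW : x ∈ M₀ ∪ {x ∈ Z | x ∈ NewAt F A j} := by rw [hWeq]; exact hx1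
    rcases hxW with h | h
    · exact h
    · exact absurd h.2 hx2

end StepLemmas






section Assembly

variable {F : Type u'} {A : Type v'}
variable {DR IR : Program (PAtom F A)}

lemma multiStepProg_nil {X : Set (PAtom F A)} {i : ℕ} :
    multiStepProg DR X ([] : List A) i = factsOf X := by
  have : (⋃ k : Fin (List.length ([] : List A)),
      (CPstep DR (i + k.1) ∪ fixcons {PAtom.occ (([] : List A).get k) (i + k.1)}
        (OccAt F A (i + k.1)))) = (∅ : Program (PAtom F A)) := by
    haveI : IsEmpty (Fin (List.length ([] : List A))) := ⟨fun k => absurd k.2 (by simp)⟩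
    apply Set.iUnion_of_empty
  rw [multiStepProg, this, Set.union_empty]

lemma multiStepProg_snoc {X : Set (PAtom F A)} {i : ℕ} {p : List A} {a : A} :
    multiStepProg DR X (p ++ [a]) i = multiStepProg DR X p i ∪
      (CPstep DR (i + p.length) ∪
        fixcons {PAtom.occ a (i + p.length)} (OccAt F A (i + p.length))) := by
  ext r
  simp only [multiStepProg, Set.mem_union, Set.mem_iUnion, Fin.exists_iff]
  constructor
  · rintro (h | ⟨m, hm, h⟩)
    · exact Or.inl (Or.inl h)
    · have hm1 : m < p.length + 1 := by simpa using hm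
      rcases Nat.lt_or_ge m p.length with hlt | hge
      · have hget : (p ++ [a]).get ⟨m, hm⟩ = p.get ⟨m, hlt⟩ := by
          rw [List.get_eq_getElem, List.get_eq_getElem, List.getElem_append_left]
        rw [hget] at h
        exact Or.inl (Or.inr ⟨m, hlt, h⟩)
      · have hme : m = p.length := by omega
        have hget : (p ++ [a]).get ⟨m, hm⟩ = a := by
          rw [List.get_eq_getElem]
          exact List.getElem_concat_length hme hm
        rw [hget] at h
        subst hme
        exact Or.inr h
  · rintro ((h | ⟨m, hm, h⟩) | h)
    · exact Or.inl h
    · have hm' : m < (p ++ [a]).length := by simp; omega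
      have hget : (p ++ [a]).get ⟨m, hm'⟩ = p.get ⟨m, hm⟩ := by
        rw [List.get_eq_getElem, List.get_eq_getElem, List.getElem_append_left]
      refine Or.inr ⟨m, hm', ?_⟩
      rw [hget]
      exact h
    · have hm' : p.length < (p ++ [a]).length := by simp
      have hget : (p ++ [a]).get ⟨p.length, hm'⟩ = a := by
        rw [List.get_eq_getElem]
        exact List.getElem_concat_length rfl hm'
      refine Or.inr ⟨p.length, hm', ?_⟩
      rw [hget]
      exact h

lemma msp_head_old (hDR : DynRules DR) {X : Set (PAtom F A)} {i : ℕ}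
    (hXnew : ∀ x ∈ X, ∀ j', i ≤ j' → x ∉ NewAt F A j') {p : List A} {j' : ℕ}
    (hj' : i + p.length ≤ j') :
    ∀ r ∈ multiStepProg DR X p i, ∀ x ∈ r.head.atoms, x ∉ NewAt F A j' := by
  rintro r (hr | hr)
  · obtain ⟨y, hy, rfl⟩ := hr
    intro x hx
    obtain rfl : x = y := hx
    exact hXnew x hy j' (le_trans (Nat.le_add_right i p.length) hj')
  · simp only [Set.mem_iUnion] at hr
    obtain ⟨k, hrk⟩ := hr
    intro x hx
    exact mem_NewAt_elim (stepProg_head_new hDR r hrk x hx) (by have := k.isLt; omega)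

lemma msp_body_old (hDR : DynRules DR) {X : Set (PAtom F A)} {i : ℕ} (hi : 1 ≤ i)
    {p : List A} {j' : ℕ} (hj' : i + p.length ≤ j') :
    ∀ r ∈ multiStepProg DR X p i, ∀ l ∈ r.body, l.atomOf ∉ NewAt F A j' := by
  rintro r (hr | hr)
  · obtain ⟨y, hy, rfl⟩ := hr
    intro l hl
    exact absurd hl (Set.notMem_empty l)
  · simp only [Set.mem_iUnion] at hr
    obtain ⟨k, hrk⟩ := hr
    exact stepProg_body_old hDR (by omega) (by have := k.isLt; omega) r hrk

lemma X_t_mem {n m : ℕ} {X : Set (PAtom F A)}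
    (hX : StableModel (CPinit DR IR n m) X) {k : ℕ} (h1 : 1 ≤ k) (h2 : k ≤ n) :
    PAtom.t k ∈ X :=
  (hX.1 _ (Or.inl (Or.inl (Or.inl ⟨k, h1, h2, rfl⟩)))
    (fun l hl => absurd hl (Set.notMem_empty l))).1

lemma X_not_new [Nonempty A] (hDR : DynRules DR) (hIR : InitRules IR) {n m : ℕ} {X : Set (PAtom F A)}
    (hX : StableModel (CPinit DR IR n m) X) {j' : ℕ} (hj' : m < j') (hj'' : 1 ≤ j') :
    ∀ x ∈ X, x ∉ NewAt F A j' := by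
  intro x hxX hxN
  rcases stable_subset_heads hX hxX with ⟨S, ⟨r, rfl⟩, hS⟩
  simp only [Set.mem_iUnion] at hS
  obtain ⟨hr, hx⟩ := hS
  rcases hr with (hr | hr) | hr
  · rcases hr with ⟨k, _, _, rfl⟩ | ⟨b, rfl⟩
    · obtain rfl : x = PAtom.t k := hx
      exact t_not_mem_NewAt hxN
    · obtain rfl : x = PAtom.action b := hx
      rcases hxN with ⟨c, h⟩ | ⟨g, h⟩ | h <;> exact absurd h (by simp)
  · obtain ⟨r', ⟨r₀, hr₀, rfl⟩, rfl⟩ := hr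
    obtain ⟨H, B⟩ := r₀
    cases H with
    | atom q =>
      obtain ⟨f, rfl⟩ := isFlu_iff.mp ((hIR _ hr₀).1 q (Or.inl rfl))
      obtain rfl : x = PAtom.h f 0 := hx
      rw [h_mem_NewAt] at hxN
      omega
    | choice q =>
      obtain ⟨f, rfl⟩ := isFlu_iff.mp ((hIR _ hr₀).1 q (Or.inr rfl))
      obtain rfl : x = PAtom.h f 0 := hx
      rw [h_mem_NewAt] at hxN
      omega
    | bot =>
      obtain rfl : x = PAtom.alpha 0 := hx
      rw [alpha_mem_NewAt] at hxN
      omega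
  · simp only [Set.mem_iUnion] at hr
    obtain ⟨k, hk, hrk⟩ := hr
    rcases hk with ⟨hk1, hk2⟩
    have : x ∈ NewAt F A k :=
      stepProg_head_new (b := Classical.arbitrary A) hDR r (Or.inl hrk) x hx
    exact mem_NewAt_elim this (by omega) hxN


lemma tauDR_eq_some_of (hdet : Deterministic DR) {s : Set F} {a : A} {M : Set (PAtom F A)}
    (hM : StableModel (stateProg s ∪ actProg a ∪ DR) M) :
    tauDR DR s a = some {f | PAtom.flu f ∈ M} := by
  have hex : ∃! M', StableModel (stateProg s ∪ actProg a ∪ DR) M' :=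
    ⟨M, hM, fun y hy => hdet s a hy hM⟩
  rw [tauDR, dif_pos hex]
  have heq : hex.choose = M := hdet s a hex.choose_spec.1 hM
  rw [heq]

lemma tauDR_eq_none_of {s : Set F} {a : A}
    (h : ¬ ∃ M, StableModel (stateProg s ∪ actProg a ∪ DR) M) :
    tauDR DR s a = none := by
  rw [tauDR, dif_neg]
  intro hex
  exact h ⟨hex.choose, hex.choose_spec.1⟩

lemma tauSet_singleton_some {τ : Set F → A → Option (Set F)} {s u : Set F} {a : A}
    (h : τ s a = some u) : tauSet τ {s} a = some {u} := by
  rw [tauSet, if_pos]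
  · congr 1
    ext v
    simp only [Set.mem_setOf_eq, Set.mem_singleton_iff]
    constructor
    · rintro ⟨s', hs', hv⟩
      subst hs'
      rw [h] at hv
      exact (Option.some_inj.mp hv).symm
    · rintro rfl
      exact ⟨s, rfl, h⟩
  · intro s' hs'
    rw [Set.mem_singleton_iff] at hs'
    subst hs'
    rw [h]
    simp

lemma tauSet_singleton_none {τ : Set F → A → Option (Set F)} {s : Set F} {a : A}
    (h : τ s a = none) : tauSet τ {s} a = none := by
  rw [tauSet, if_neg]
  push_neg
  exact ⟨s, rfl, h⟩

lemma tauList_snoc (τ : Set F → A → Option (Set F)) (p : List A) (a : A) :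
    ∀ S, tauList τ (p ++ [a]) S = (tauList τ p S).bind (fun S' => tauSet τ S' a) := by
  induction p with
  | nil =>
    intro S
    show (tauSet τ S a).bind (tauList τ []) = tauSet τ S a
    cases tauSet τ S a <;> rfl
  | cons b q ih =>
    intro S
    show (tauSet τ S b).bind (tauList τ (q ++ [a])) = ((tauSet τ S b).bind (tauList τ q)).bind _
    cases tauSet τ S b with
    | none => rfl
    | some S1 => exact ih S1

lemma msp_induction [Nonempty F] [Nonempty A]
    (hDR : DynRules DR) (hIR : InitRules IR)
    (hdet : Deterministic DR)
    {s' : Set F} {i n : ℕ} (hi : 1 ≤ i)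
    {X : Set (PAtom F A)}
    (hX : StableModel (CPinit DR IR n (i - 1)) X)
    (hs' : s' = {f | PAtom.h f (i - 1) ∈ X})
    (hal : PAtom.alpha (i - 1) ∉ X) :
    ∀ p : List A, i + p.length ≤ n + 1 →
      (tauList (tauDR DR) p {s'} = none ∧
        ∀ Z, ¬ StableModel (multiStepProg DR X p i) Z) ∨
      (∃ t Y, tauList (tauDR DR) p {s'} = some {t} ∧
        (∀ Z, StableModel (multiStepProg DR X p i) Z ↔ Z = Y) ∧
        t = {f | PAtom.h f (i + p.length - 1) ∈ Y} ∧
        X ⊆ Y ∧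
        (∀ x ∈ Y, ∀ j', i + p.length ≤ j' → x ∉ NewAt F A j') ∧
        PAtom.alpha (i + p.length - 1) ∉ Y) := by
  have hXnew : ∀ x ∈ X, ∀ j', i ≤ j' → x ∉ NewAt F A j' := by
    intro x hx j' hj'
    exact X_not_new hDR hIR hX (by omega) (by omega) x hx
  intro p
  induction p using List.reverseRecOn with
  | nil =>
    intro _
    refine Or.inr ⟨s', X, rfl, ?_, ?_, subset_rfl, ?_, ?_⟩
    · intro Z
      rw [multiStepProg_nil]
      exact stable_factsOf_iff
    · simpa using hs'
    · simpa using fun x hx j' hj' => hXnew x hx j' (by omega)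
    · simpa using hal
  | append_singleton p a ih =>
    intro hlen
    rw [List.length_append, List.length_singleton] at hlen
    have hlenp : i + p.length ≤ n + 1 := by omega
    set j := i + p.length with hjdef
    have hj1 : 1 ≤ j := by omega
    have hjn : j ≤ n := by omega
    have hQbBody := msp_body_old (X := X) (p := p) (j' := j) hDR hi le_rfl
    have hQbHead := msp_head_old (X := X) (p := p) (j' := j) hDR hXnew le_rfl
    have hsnoc := multiStepProg_snoc (DR := DR) (X := X) (i := i) (p := p) (a := a)
    have hlen2 : (p ++ [a]).length = p.length + 1 := by simp
    rcases ih hlenp with ⟨hnone, hnostable⟩ | ⟨t, Y, hsome, hchar, hteq, hXY, hYnew, hYal⟩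
    · left
      constructor
      · rw [tauList_snoc, hnone]
        rfl
      · intro Z hZ
        rw [hsnoc] at hZ
        exact hnostable _ (step_restrict_stable hDR hQbBody hQbHead hZ)
    · have hchar' : ∀ W, StableModel (multiStepProg DR X p i) W ↔ W = Y := hchar
      have hYb1 : ∀ x ∈ Y, x ∉ NewAt F A j := fun x hx => hYnew x hx j le_rfl
      have htY : PAtom.t j ∈ Y := hXY (X_t_mem hX hj1 hjn)
      have halY : PAtom.alpha (j - 1) ∉ Y := by
        have : i + p.length - 1 = j - 1 := rfl
        rw [← this]; exact hYal
      have htprev : t = {f | PAtom.h f (j - 1) ∈ Y} := hteq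
      by_cases hex : ∃ M, StableModel (stateProg t ∪ actProg a ∪ DR) M
      · obtain ⟨M, hM⟩ := hex
        right
        refine ⟨{f | PAtom.flu f ∈ M}, ZOf Y j M, ?_, ?_, ?_, ?_, ?_, ?_⟩
        · rw [tauList_snoc, hsome]
          show tauSet (tauDR DR) {t} a = _
          rw [tauSet_singleton_some (tauDR_eq_some_of hdet hM)]
        · intro Z
          rw [hsnoc]
          constructor
          · intro hZ
            obtain ⟨M', hM', hZeq⟩ := step_SM_mp hDR hj1 hQbBody hQbHead hchar' hYb1 htY
              halY htprev hZ
            rw [hZeq, hdet t a hM' hM]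
          · rintro rfl
            exact step_SM_mpr hDR hj1 hQbBody hQbHead ((hchar' Y).mpr rfl) hYb1 htY
              halY htprev hM
        · ext f
          rw [hlen2]
          show PAtom.flu f ∈ M ↔ PAtom.h f (i + (p.length + 1) - 1) ∈ ZOf Y j M
          have : i + (p.length + 1) - 1 = j := by omega
          rw [this, ZOf_mem_h hYb1]
        · exact fun x hx => Or.inl (Or.inl (hXY hx))
        · intro x hx j' hj'
          rw [hlen2] at hj'
          rcases hx with (hx | ⟨b, _, rfl⟩) | ⟨f, _, rfl⟩
          · exact hYnew x hx j' (by omega)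
          · rw [occ_mem_NewAt]; omega
          · rw [h_mem_NewAt]; omega
        · rw [hlen2]
          have : i + (p.length + 1) - 1 = j := by omega
          rw [this]
          exact ZOf_alpha_not hYb1
      · left
        constructor
        · rw [tauList_snoc, hsome]
          show tauSet (tauDR DR) {t} a = _
          rw [tauSet_singleton_none (tauDR_eq_none_of hex)]
        · intro Z hZ
          rw [hsnoc] at hZ
          obtain ⟨M', hM', -⟩ := step_SM_mp hDR hj1 hQbBody hQbHead hchar' hYb1 htY
            halY htprev hZ
          exact hex ⟨M', hM'⟩

end Assembly


end ASP

open ASP in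
/-- Lemma 2 of the paper: correspondence between executing the plan `p` from the
state `s'` and the stable models of
`X ∪ ⋃_{j=i}^{i+n−1} (CP'[j] ∪ fixcons({occ(a_{j−i+1},j)}, Occ_j))`. -/
theorem multi_step_correspondence {F A : Type*} [Nonempty F] [Nonempty A]
    (DR IR GR : Program (PAtom F A))
    (hDR : DynRules DR) (hIR : InitRules IR) (hGR : GoalRules GR)
    (hdet : Deterministic DR) (hine : Inertial DR)
    (hInonempty : (statesOf IR).Nonempty) (hGnonempty : (goalStates GR).Nonempty)
    (s s' : Set F) (p : List A) (hp : p ≠ []) (i n : ℕ) (hi : 1 ≤ i)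
    (hin : i + p.length - 1 ≤ n)
    (X : Set (PAtom F A))
    (hX : StableModel (CPinit DR IR n (i - 1)) X)
    (hs' : s' = {f | PAtom.h f (i - 1) ∈ X})
    (hal : PAtom.alpha (i - 1) ∉ X) :
    (tauList (tauDR DR) p {s'} = some {s} ↔
       ∃! Y, StableModel (multiStepProg DR X p i) Y ∧
         s = {f | PAtom.h f (i + p.length - 1) ∈ Y}) ∧
    (∀ Y, StableModel (multiStepProg DR X p i) Y →
       s = {f | PAtom.h f (i + p.length - 1) ∈ Y} →
       PAtom.alpha (i + p.length - 1) ∉ Y) := by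
  have hmain := msp_induction hDR hIR hdet hi hX hs' hal p (by omega)
  rcases hmain with ⟨hnone, hnostable⟩ | ⟨t, Y, hsome, hchar, hteq, hXY, hYnew, hYal⟩
  · constructor
    · constructor
      · intro h
        rw [hnone] at h
        exact absurd h (by simp)
      · rintro ⟨Y, ⟨hY, _⟩, _⟩
        exact absurd hY (hnostable Y)
    · intro Y hY _
      exact absurd hY (hnostable Y)
  · constructor
    · constructor
      · intro h
        rw [hsome] at h
        have hts : t = s := Set.singleton_eq_singleton_iff.mp (Option.some_inj.mp h)
        refine ⟨Y, ⟨(hchar Y).mpr rfl, by rw [← hts]; exact hteq⟩, ?_⟩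
        rintro Y' ⟨hY', _⟩
        exact (hchar Y').mp hY'
      · rintro ⟨Y', ⟨hY', hseq⟩, _⟩
        obtain rfl := (hchar Y').mp hY'
        have hts : t = s := hteq.trans hseq.symm
        rw [hsome, hts]
    · intro Y' hY' _
      rw [(hchar Y').mp hY']
      exact hYal
end

section
/- Let 𝒟 be a planning description representing a conformant planning problem 𝒫 such that IR is in GDT form, and let n be a positive integer. Let p = [a₁; …; aₙ] be a plan, X = {occ(a₁,1), …, occ(aₙ,n)}, and Y ⊆ Open. Then the following are equivalent: (i) there is some stable model Z of CP ∪ fixcons(X, Occ) ∪ fixcons(Y, Open) such that α(n) ∉ Z; (ii) there is s₀ ∈ SM(IR) such that Y = {h(f,0) ∈ Open | f ∈ s₀} and τ_DR({s₀},p) ⊆ G. -/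
namespace ASP

universe u' v'
variable {α : Type u'} {β : Type v'}

lemma redSat_self {Z M : Set α} {l : Lit α} (h : l.redSat Z M) : l.redSat Z Z :=
  ⟨h.1, h.1⟩

lemma mem_of_fact {P : Program α} {Z : Set α} (h : StableModel P Z) {a : α}
    (hr : (⟨Head.atom a, ∅⟩ : Rule α) ∈ P) : a ∈ Z := by
  have := h.1 _ hr (by intro l hl; simp at hl)
  exact this.1

lemma constraint_fail {P : Program α} {Z : Set α} (h : StableModel P Z) {B : Set (Lit α)}
    (hr : (⟨Head.bot, B⟩ : Rule α) ∈ P) : ¬ ∀ l ∈ B, l.redSat Z Z :=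
  fun hb => h.1 _ hr hb

lemma exists_head_of_mem {P : Program α} {Z : Set α} (h : StableModel P Z) {q : α}
    (hq : q ∈ Z) : ∃ r ∈ P, headAtomIs r q := by
  by_contra hc
  push_neg at hc
  have hM : redModel P Z (Z \ {q}) := by
    intro r hr hb
    have hZZ := h.1 r hr (fun l hl => redSat_self (hb l hl))
    cases hh : r.head with
    | atom a =>
      rw [hh] at hZZ
      have hne : a ≠ q := fun he => hc r hr (by rw [headAtomIs, hh, he]; left; rfl)
      exact ⟨hZZ.1, hZZ.2, hne⟩
    | choice a =>
      rw [hh] at hZZ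
      have hne : a ≠ q := fun he => hc r hr (by rw [headAtomIs, hh, he]; right; rfl)
      rcases hZZ with ⟨h1, h2⟩ | ⟨h1, h2⟩
      · exact Or.inl ⟨h1, h2, hne⟩
      · exact Or.inr ⟨h1, fun hm => h2 hm.1⟩
    | bot => rw [hh] at hZZ; exact hZZ.elim
  have heq := h.2 _ Set.diff_subset hM
  rw [← heq] at hq
  simp at hq

lemma Lit.redSat_map {g : α → β} {X M : Set α} {X' M' : Set β} {l : Lit α}
    (h1 : l.atomOf ∈ X ↔ g l.atomOf ∈ X') (h2 : l.atomOf ∈ M ↔ g l.atomOf ∈ M') :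
    (mapLit g l).redSat X' M' ↔ l.redSat X M := by
  cases l <;> simp [mapLit, Lit.redSat, Lit.sat, Lit.atomOf] at h1 h2 ⊢ <;> tauto

lemma Head.redSat_map {g : α → β} {X M : Set α} {X' M' : Set β} {H : Head α}
    (h : ∀ a, (H = .atom a ∨ H = .choice a) → ((a ∈ X ↔ g a ∈ X') ∧ (a ∈ M ↔ g a ∈ M'))) :
    (mapHead g H).redSat X' M' ↔ H.redSat X M := by
  cases H with
  | atom a => have := h a (Or.inl rfl); simp only [mapHead, Head.redSat]; tauto
  | choice a => have := h a (Or.inr rfl); simp only [mapHead, Head.redSat]; tauto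
  | bot => simp [mapHead, Head.redSat]

end ASP
namespace ASP

universe u' v'
variable {F : Type u'} {A : Type v'}

lemma mem_fluSet {s : Set F} {f : F} : (PAtom.flu f : PAtom F A) ∈ fluSet s ↔ f ∈ s := by
  simp [fluSet]

lemma mem_fluPSet {s : Set F} {f : F} : (PAtom.fluP f : PAtom F A) ∈ fluPSet s ↔ f ∈ s := by
  simp [fluPSet]

/-- The step program. -/
def stepProg (DR : Program (PAtom F A)) (s : Set F) (a : A) : Program (PAtom F A) :=
  stateProg s ∪ actProg a ∪ DR

/-- The intended stable model of the step program. -/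
def stepModel (s : Set F) (a : A) (s' : Set F) : Set (PAtom F A) :=
  fluPSet s ∪ {PAtom.act a} ∪ fluSet s'

lemma mem_stepModel_flu {s : Set F} {a : A} {s' : Set F} {f : F} :
    (PAtom.flu f : PAtom F A) ∈ stepModel s a s' ↔ f ∈ s' := by
  simp [stepModel, fluSet, fluPSet]

lemma mem_stepModel_fluP {s : Set F} {a : A} {s' : Set F} {f : F} :
    (PAtom.fluP f : PAtom F A) ∈ stepModel s a s' ↔ f ∈ s := by
  simp [stepModel, fluSet, fluPSet]

lemma mem_stepModel_act {s : Set F} {a : A} {s' : Set F} {b : A} :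
    (PAtom.act b : PAtom F A) ∈ stepModel s a s' ↔ b = a := by
  simp [stepModel, fluSet, fluPSet]

lemma step_shape {DR : Program (PAtom F A)} (hDR : DynRules DR) {s : Set F} {a : A}
    {M : Set (PAtom F A)} (h : StableModel (stepProg DR s a) M) :
    M = stepModel s a {f | PAtom.flu f ∈ M} := by
  ext x
  constructor
  · intro hx
    obtain ⟨r, hr, hh⟩ := exists_head_of_mem h hx
    rcases hr with (hr | hr) | hr
    · obtain ⟨y, hy, rfl⟩ := hr
      rcases hh with hh | hh <;> simp at hh
      subst hh
      exact Or.inl (Or.inl hy)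
    · rw [actProg, Set.mem_singleton_iff] at hr
      subst hr
      rcases hh with hh | hh <;> simp at hh
      subst hh
      exact Or.inl (Or.inr rfl)
    · have := (hDR r hr).1 x hh
      cases x <;> simp [isFlu] at this
      exact Or.inr ⟨_, hx, rfl⟩
  · rintro ((⟨f, hf, rfl⟩ | rfl) | ⟨f, hf, rfl⟩)
    · exact mem_of_fact h (Or.inl (Or.inl ⟨_, ⟨f, hf, rfl⟩, rfl⟩))
    · exact mem_of_fact h (Or.inl (Or.inr rfl))
    · exact hf

lemma tauDR_eq_some_iff {DR : Program (PAtom F A)} (hdet : Deterministic DR) {s : Set F}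
    {a : A} {s' : Set F} :
    tauDR DR s a = some s' ↔
      ∃ M, StableModel (stepProg DR s a) M ∧ s' = {f | PAtom.flu f ∈ M} := by
  rw [tauDR]
  split
  case isTrue h =>
    simp only [Option.some.injEq]
    constructor
    · rintro rfl; exact ⟨h.choose, h.choose_spec.1, rfl⟩
    · rintro ⟨M, hM, rfl⟩
      have : M = h.choose := hdet s a hM h.choose_spec.1
      rw [this]
  case isFalse h =>
    simp only [false_iff, reduceCtorEq]
    rintro ⟨M, hM, rfl⟩
    exact h ⟨M, hM, fun y hy => hdet s a hy hM⟩

lemma tauList_singleton {DR : Program (PAtom F A)} :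
    ∀ (q : List A) (σ : ℕ → Set F),
      (∀ k, (hk : k < q.length) → tauDR DR (σ k) (q.get ⟨k, hk⟩) = some (σ (k + 1))) →
      tauList (tauDR DR) q {σ 0} = some {σ q.length}
  | [], σ, _ => rfl
  | a :: q', σ, h => by
    have h0 := h 0 (by simp)
    simp only [List.get] at h0
    have hset : tauSet (tauDR DR) {σ 0} a = some {σ 1} := by
      rw [tauSet, if_pos]
      · congr 1
        ext s'
        simp only [Set.mem_setOf_eq, Set.mem_singleton_iff]
        constructor
        · rintro ⟨s, rfl, hs⟩
          rw [h0] at hs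
          exact (Option.some_injective _ hs).symm
        · rintro rfl
          exact ⟨σ 0, rfl, h0⟩
      · rintro s rfl
        rw [h0]; simp
    rw [tauList, hset, Option.bind_some]
    have := tauList_singleton q' (fun k => σ (k + 1)) (fun k hk => h (k + 1) (by simpa using hk))
    simpa using this

lemma tauList_extract {DR : Program (PAtom F A)} [Nonempty F] :
    ∀ (q : List A) (s : Set F) (S : Set (Set F)),
      tauList (tauDR DR) q {s} = some S →
      ∃ σ : ℕ → Set F, σ 0 = s ∧
        (∀ k, (hk : k < q.length) → tauDR DR (σ k) (q.get ⟨k, hk⟩) = some (σ (k + 1))) ∧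
        S = {σ q.length}
  | [], s, S, h => by
    refine ⟨fun _ => s, rfl, fun k hk => by simp at hk, ?_⟩
    simp [tauList] at h
    simp [← h]
  | a :: q', s, S, h => by
    rw [tauList] at h
    rcases hSa : tauSet (tauDR DR) {s} a with _ | S₁
    · rw [hSa] at h; simp at h
    rw [hSa] at h
    rw [Option.bind_some] at h
    rw [tauSet] at hSa
    split at hSa
    case isFalse => simp at hSa
    case isTrue hne =>
      have hne' := hne s rfl
      rcases hs1 : tauDR DR s a with _ | s₁
      · exact absurd hs1 hne'
      have hS1 : S₁ = {s₁} := by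
        have := Option.some_injective _ hSa
        rw [← this]
        ext x
        simp only [Set.mem_setOf_eq, Set.mem_singleton_iff]
        constructor
        · rintro ⟨y, rfl, hy⟩
          rw [hs1] at hy
          exact (Option.some_injective _ hy).symm
        · rintro rfl
          exact ⟨s, rfl, hs1⟩
      subst hS1
      obtain ⟨σ, hσ0, hσ, hS⟩ := tauList_extract q' s₁ S h
      refine ⟨fun k => Nat.rec s (fun k _ => σ k) k, rfl, ?_, ?_⟩
      · intro k hk
        cases k with
        | zero => simpa [hσ0] using hs1
        | succ k =>
          have := hσ k (by simpa using hk)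
          simpa using this
      · simpa using hS

end ASP
namespace ASP

universe u' v'
variable {F : Type u'} {A : Type v'}

lemma goal_stable_iff {GR : Program (PAtom F A)} (hGR : GoalRules GR) {s : Set F} :
    StableModel (choiceAllFlu F A ∪ GR) (fluSet s) ↔
      ∀ r ∈ GR, ¬ ∀ l ∈ r.body, l.redSat (fluSet s) (fluSet s) := by
  constructor
  · intro h r hr
    have hbot := (hGR r hr).1
    intro hb
    have := h.1 r (Or.inr hr) hb
    rw [hbot] at this
    exact this
  · intro hc
    constructor
    · intro r hr hb
      rcases hr with hr | hr
      · obtain ⟨f, rfl⟩ := hr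
        simp only [Head.redSat]
        by_cases hf : (PAtom.flu f : PAtom F A) ∈ fluSet s
        · exact Or.inl ⟨hf, hf⟩
        · exact Or.inr ⟨hf, hf⟩
      · have := (hGR r hr).1
        rw [this]
        exact absurd hb (hc r hr)
    · intro N hN hmod
      refine Set.Subset.antisymm hN ?_
      rintro x ⟨f, hf, rfl⟩
      have := hmod ⟨Head.choice (PAtom.flu f), ∅⟩ (Or.inl ⟨f, rfl⟩) (by intro l hl; simp at hl)
      simp only [Head.redSat] at this
      rcases this with ⟨_, h2⟩ | ⟨h1, _⟩
      · exact h2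
      · exact absurd (mem_fluSet.mpr hf) h1

lemma mem_goalStates_iff {GR : Program (PAtom F A)} (hGR : GoalRules GR) {s : Set F} :
    s ∈ goalStates GR ↔ StableModel (choiceAllFlu F A ∪ GR) (fluSet s) := by
  constructor
  · rintro ⟨M, hM, rfl⟩
    have hshape : M = fluSet {f | PAtom.flu f ∈ M} := by
      ext x
      constructor
      · intro hx
        obtain ⟨r, hr, hh⟩ := exists_head_of_mem hM hx
        rcases hr with hr | hr
        · obtain ⟨f, rfl⟩ := hr
          rcases hh with hh | hh <;> simp at hh
          subst hh
          exact ⟨f, hx, rfl⟩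
        · have := (hGR r hr).1
          rcases hh with hh | hh <;> rw [this] at hh <;> simp at hh
      · rintro ⟨f, hf, rfl⟩
        exact hf
    rw [← hshape]
    exact hM
  · intro h
    refine ⟨fluSet s, h, ?_⟩
    ext f
    simp [mem_fluSet]

lemma mem_tttInit {IR : Program (PAtom F A)} {r' : Rule (PAtom F A)} :
    r' ∈ tttInit IR ↔ ∃ r ∈ IR, r' = replBotHead (PAtom.alpha 0) (mapRule renInit r) := by
  simp only [tttInit, botTo, ttInit, mapProg, Set.mem_image]
  constructor
  · rintro ⟨x, ⟨r, hr, rfl⟩, rfl⟩; exact ⟨r, hr, rfl⟩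
  · rintro ⟨r, hr, rfl⟩; exact ⟨_, ⟨r, hr, rfl⟩, rfl⟩

lemma mem_tttDyn {DR : Program (PAtom F A)} {i : ℕ} {r' : Rule (PAtom F A)} :
    r' ∈ tttDyn DR i ↔ ∃ r ∈ DR,
      r' = ⟨mapHead (renDyn i) r.head,
            (mapLit (renDyn i) '' r.body ∪ {Lit.pos (PAtom.t i)}) ∪ {Lit.neg (PAtom.alpha i)}⟩ := by
  simp only [tttDyn, ttDyn, addBody, mapProg, Set.mem_setOf_eq, Set.mem_image]
  constructor
  · rintro ⟨x, ⟨y, ⟨r, hr, rfl⟩, rfl⟩, rfl⟩; exact ⟨r, hr, rfl⟩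
  · rintro ⟨r, hr, rfl⟩; exact ⟨_, ⟨_, ⟨r, hr, rfl⟩, rfl⟩, rfl⟩

lemma mem_tttGoal {GR : Program (PAtom F A)} {n : ℕ} {r' : Rule (PAtom F A)} :
    r' ∈ tttGoal GR n ↔ ∃ r ∈ GR,
      r' = ⟨mapHead (renGoal n) r.head, mapLit (renGoal n) '' r.body ∪ {Lit.neg (PAtom.alpha n)}⟩ := by
  simp only [tttGoal, ttGoal, addBody, mapProg, Set.mem_setOf_eq, Set.mem_image]
  constructor
  · rintro ⟨x, ⟨r, hr, rfl⟩, rfl⟩; exact ⟨r, hr, rfl⟩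
  · rintro ⟨r, hr, rfl⟩; exact ⟨_, ⟨r, hr, rfl⟩, rfl⟩

lemma init_lit_iff {V W : Set (PAtom F A)}
    (hflu : ∀ g : F, (PAtom.flu g : PAtom F A) ∈ V ↔ (PAtom.h g 0 : PAtom F A) ∈ W)
    {a : PAtom F A} (ha : isFlu a) : (a ∈ V ↔ renInit a ∈ W) := by
  cases a <;> simp [isFlu] at ha
  exact hflu _

lemma dyn_lit_iff {i : ℕ} {V W : Set (PAtom F A)}
    (hflu : ∀ g : F, (PAtom.flu g : PAtom F A) ∈ V ↔ (PAtom.h g i : PAtom F A) ∈ W)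
    (hfluP : ∀ g : F, (PAtom.fluP g : PAtom F A) ∈ V ↔ (PAtom.h g (i - 1) : PAtom F A) ∈ W)
    (hact : ∀ b : A, (PAtom.act b : PAtom F A) ∈ V ↔ (PAtom.occ b i : PAtom F A) ∈ W)
    {a : PAtom F A} (ha : isDynBody a ∨ isFlu a) : (a ∈ V ↔ renDyn i a ∈ W) := by
  cases a <;> simp [isFlu, isDynBody] at ha
  · exact hflu _
  · exact hfluP _
  · exact hact _

lemma goal_lit_iff {n : ℕ} {V W : Set (PAtom F A)}
    (hflu : ∀ g : F, (PAtom.flu g : PAtom F A) ∈ V ↔ (PAtom.h g n : PAtom F A) ∈ W)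
    {a : PAtom F A} (ha : isFlu a) : (a ∈ V ↔ renGoal n a ∈ W) := by
  cases a <;> simp [isFlu] at ha
  exact hflu _

lemma mem_B_iff {DR IR GR : Program (PAtom F A)} {n : ℕ} {X Y : Set (PAtom F A)}
    {r : Rule (PAtom F A)} :
    r ∈ CP DR IR GR n ∪ fixcons X (OccSet F A n) ∪ fixcons Y (OpenSet IR) ↔
      r ∈ factsP F A n ∨ r ∈ tttInit IR ∨ (∃ i ∈ Set.Icc 1 n, r ∈ tttDyn DR i) ∨
      r ∈ tttGoal GR n ∨ (∃ i ∈ Set.Icc 1 n, r ∈ generateAt F A i) ∨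
      (∃ i ∈ Set.Icc 1 n, r ∈ alphaAt F A i) ∨
      r ∈ fixcons X (OccSet F A n) ∨ r ∈ fixcons Y (OpenSet IR) := by
  simp only [CP, ttt, generateP, alphaProg, Set.mem_union, Set.mem_iUnion, exists_prop,
    or_assoc]

end ASP
namespace ASP

universe u' v'
variable {F : Type u'} {A : Type v'}

/-- The constructed stable model of the translated program. -/
def ZC (n : ℕ) (aAct : ℕ → A) (σ : ℕ → Set F) : Set (PAtom F A) :=
  {x | (∃ i, 1 ≤ i ∧ i ≤ n ∧ x = PAtom.t i) ∨ (∃ b : A, x = PAtom.action b) ∨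
       (∃ i, 1 ≤ i ∧ i ≤ n ∧ x = PAtom.occ (aAct i) i) ∨
       (∃ f i, i ≤ n ∧ f ∈ σ i ∧ x = PAtom.h f i)}

variable {n : ℕ} {aAct : ℕ → A} {σ : ℕ → Set F}

@[simp] lemma ZC_t {j : ℕ} : (PAtom.t j : PAtom F A) ∈ ZC n aAct σ ↔ 1 ≤ j ∧ j ≤ n := by
  simp [ZC]

@[simp] lemma ZC_action {b : A} : (PAtom.action b : PAtom F A) ∈ ZC n aAct σ := by
  simp [ZC]

@[simp] lemma ZC_occ {b : A} {j : ℕ} :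
    (PAtom.occ b j : PAtom F A) ∈ ZC n aAct σ ↔ 1 ≤ j ∧ j ≤ n ∧ b = aAct j := by
  simp only [ZC, Set.mem_setOf_eq]
  constructor
  · rintro (⟨i,_,_,h⟩ | ⟨b',h⟩ | ⟨i,h1,h2,h⟩ | ⟨f,i,_,_,h⟩) <;> simp_all
  · rintro ⟨h1, h2, rfl⟩
    exact Or.inr (Or.inr (Or.inl ⟨j, h1, h2, rfl⟩))

@[simp] lemma ZC_h {f : F} {j : ℕ} :
    (PAtom.h f j : PAtom F A) ∈ ZC n aAct σ ↔ j ≤ n ∧ f ∈ σ j := by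
  simp only [ZC, Set.mem_setOf_eq]
  constructor
  · rintro (⟨i,_,_,h⟩ | ⟨b',h⟩ | ⟨i,h1,h2,h⟩ | ⟨f',i,h1,h2,h⟩) <;> simp_all
  · rintro ⟨h1, h2⟩
    exact Or.inr (Or.inr (Or.inr ⟨f, j, h1, h2, rfl⟩))

@[simp] lemma ZC_alpha {j : ℕ} : (PAtom.alpha j : PAtom F A) ∉ ZC n aAct σ := by
  rintro (⟨i,_,_,h⟩ | ⟨b',h⟩ | ⟨i,h1,h2,h⟩ | ⟨f',i,h1,h2,h⟩) <;> simp_all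

lemma head_lift {H : Head (PAtom F A)} {Z M' : Set (PAtom F A)} (hM' : M' ⊆ Z)
    (hcond : ∀ a, (H = .atom a ∨ H = .choice a) → a ∈ Z → a ∈ M')
    (hZZ : H.redSat Z Z) : H.redSat Z M' := by
  cases H with
  | atom a => exact ⟨hZZ.1, hcond a (Or.inl rfl) hZZ.1⟩
  | choice a =>
    rcases hZZ with ⟨h1, _⟩ | ⟨h1, _⟩
    · exact Or.inl ⟨h1, hcond a (Or.inr rfl) h1⟩
    · exact Or.inr ⟨h1, fun hm => h1 (hM' hm)⟩
  | bot => exact hZZ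

lemma X_occ_iff [Nonempty A] {p : List A} {X : Set (PAtom F A)}
    (hXdef : X = {x | ∃ k : Fin p.length, x = PAtom.occ (p.get k) (k.1 + 1)})
    {b : A} {j : ℕ} :
    PAtom.occ b j ∈ X ↔ 1 ≤ j ∧ j ≤ p.length ∧ b = p.getD (j - 1) (Classical.arbitrary A) := by
  subst hXdef
  simp only [Set.mem_setOf_eq]
  constructor
  · rintro ⟨k, hk⟩
    simp only [PAtom.occ.injEq] at hk
    obtain ⟨rfl, rfl⟩ := hk
    refine ⟨by omega, by omega, ?_⟩
    simp [List.getD_eq_getElem?_getD, List.getElem?_eq_getElem k.2]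
  · rintro ⟨h1, h2, rfl⟩
    refine ⟨⟨j - 1, by omega⟩, ?_⟩
    have : j - 1 + 1 = j := by omega
    simp [List.getD_eq_getElem?_getD, List.getElem?_eq_getElem (show j - 1 < p.length by omega),
      this]

lemma X_shape [Nonempty A] {p : List A} {X : Set (PAtom F A)}
    (hXdef : X = {x | ∃ k : Fin p.length, x = PAtom.occ (p.get k) (k.1 + 1)})
    {x : PAtom F A} (hx : x ∈ X) : ∃ b j, x = PAtom.occ b j := by
  subst hXdef
  obtain ⟨k, rfl⟩ := hx
  exact ⟨_, _, rfl⟩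

end ASP
namespace ASP

universe u'' v''
variable {F : Type u''} {A : Type v''}

lemma body_redSat_map {g : PAtom F A → PAtom F A} {XV MV XW MW : Set (PAtom F A)}
    {body : Set (Lit (PAtom F A))}
    (hiff : ∀ l ∈ body, (l.atomOf ∈ XV ↔ g l.atomOf ∈ XW) ∧ (l.atomOf ∈ MV ↔ g l.atomOf ∈ MW)) :
    (∀ l' ∈ mapLit g '' body, l'.redSat XW MW) ↔ (∀ l ∈ body, l.redSat XV MV) := by
  rw [Set.forall_mem_image]
  exact forall₂_congr fun l hl => Lit.redSat_map (hiff l hl).1 (hiff l hl).2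

lemma replBotHead_body (q : PAtom F A) (r : Rule (PAtom F A)) :
    (replBotHead q r).body = r.body := by
  obtain ⟨h, b⟩ := r
  cases h <;> rfl

end ASP
namespace ASP

universe u' v'
variable {F : Type u'} {A : Type v'}

set_option maxHeartbeats 1000000 in
theorem ZC_stable [Nonempty F] [Nonempty A]
    {DR IR GR : Program (PAtom F A)} (hDR : DynRules DR) (hIR : InitRules IR)
    (hGR : GoalRules GR) {n : ℕ} (hn : 1 ≤ n) {aAct : ℕ → A} {X Y : Set (PAtom F A)}
    (hXocc : ∀ (b : A) (j : ℕ), PAtom.occ b j ∈ X ↔ 1 ≤ j ∧ j ≤ n ∧ b = aAct j)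
    (hXshape : ∀ x ∈ X, ∃ (b : A) (j : ℕ), x = PAtom.occ b j)
    (hY : Y ⊆ OpenSet IR) {σ : ℕ → Set F}
    (h0 : StableModel IR (fluSet (σ 0)))
    (hstep : ∀ i, 1 ≤ i → i ≤ n →
      StableModel (stepProg DR (σ (i - 1)) (aAct i)) (stepModel (σ (i - 1)) (aAct i) (σ i)))
    (hgoal : StableModel (choiceAllFlu F A ∪ GR) (fluSet (σ n)))
    (hYeq : Y = {x ∈ OpenSet IR | ∃ f ∈ σ 0, x = PAtom.h f 0}) :
    StableModel (CP DR IR GR n ∪ fixcons X (OccSet F A n) ∪ fixcons Y (OpenSet IR))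
      (ZC n aAct σ) := by
  have hIX : ∀ g : F, ((PAtom.flu g : PAtom F A) ∈ fluSet (σ 0)) ↔
      (PAtom.h g 0 ∈ ZC n aAct σ) := by
    intro g; simp [mem_fluSet]
  have hGX : ∀ g : F, ((PAtom.flu g : PAtom F A) ∈ fluSet (σ n)) ↔
      (PAtom.h g n ∈ ZC n aAct σ) := by
    intro g; simp [mem_fluSet]
  have hDfluX : ∀ i, i ≤ n → ∀ g : F,
      ((PAtom.flu g : PAtom F A) ∈ stepModel (σ (i - 1)) (aAct i) (σ i)) ↔
      (PAtom.h g i ∈ ZC n aAct σ) := by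
    intro i h2 g; simp [mem_stepModel_flu, h2]
  have hDfluPX : ∀ i, i ≤ n → ∀ g : F,
      ((PAtom.fluP g : PAtom F A) ∈ stepModel (σ (i - 1)) (aAct i) (σ i)) ↔
      (PAtom.h g (i - 1) ∈ ZC n aAct σ) := by
    intro i h2 g; simp [mem_stepModel_fluP]; omega
  have hDactX : ∀ i, 1 ≤ i → i ≤ n → ∀ b : A,
      ((PAtom.act b : PAtom F A) ∈ stepModel (σ (i - 1)) (aAct i) (σ i)) ↔
      (PAtom.occ b i ∈ ZC n aAct σ) := by
    intro i h1 h2 b; simp [mem_stepModel_act, h1, h2]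
  -- body/head transfer for initial rules
  have hInitBody : ∀ r0 ∈ IR, ∀ N M : Set (PAtom F A),
      (∀ g : F, ((PAtom.flu g : PAtom F A) ∈ N ↔ PAtom.h g 0 ∈ M)) →
      ((∀ l' ∈ mapLit renInit '' r0.body, l'.redSat (ZC n aAct σ) M) ↔
        ∀ l ∈ r0.body, l.redSat (fluSet (σ 0)) N) := by
    intro r0 hr0 N M hNM
    exact body_redSat_map fun l hl =>
      ⟨init_lit_iff hIX ((hIR r0 hr0).2 l hl), init_lit_iff hNM ((hIR r0 hr0).2 l hl)⟩
  have hInitHead : ∀ r0 ∈ IR, ∀ N M : Set (PAtom F A),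
      (∀ g : F, ((PAtom.flu g : PAtom F A) ∈ N ↔ PAtom.h g 0 ∈ M)) →
      ((mapHead renInit r0.head).redSat (ZC n aAct σ) M ↔ r0.head.redSat (fluSet (σ 0)) N) := by
    intro r0 hr0 N M hNM
    refine Head.redSat_map fun a ha => ?_
    have hf : isFlu a := (hIR r0 hr0).1 a ha
    exact ⟨init_lit_iff hIX hf, init_lit_iff hNM hf⟩
  -- body/head transfer for dynamic rules
  have hDynBody : ∀ i, 1 ≤ i → i ≤ n → ∀ r0 ∈ DR, ∀ N M : Set (PAtom F A),
      (∀ g : F, ((PAtom.flu g : PAtom F A) ∈ N ↔ PAtom.h g i ∈ M)) →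
      (∀ g : F, ((PAtom.fluP g : PAtom F A) ∈ N ↔ PAtom.h g (i - 1) ∈ M)) →
      (∀ b : A, ((PAtom.act b : PAtom F A) ∈ N ↔ PAtom.occ b i ∈ M)) →
      ((∀ l' ∈ mapLit (renDyn i) '' r0.body, l'.redSat (ZC n aAct σ) M) ↔
        ∀ l ∈ r0.body, l.redSat (stepModel (σ (i - 1)) (aAct i) (σ i)) N) := by
    intro i h1 h2 r0 hr0 N M hf hfp hac
    exact body_redSat_map fun l hl =>
      ⟨dyn_lit_iff (hDfluX i h2) (hDfluPX i h2) (hDactX i h1 h2)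
          (Or.inl ((hDR r0 hr0).2 l hl)),
       dyn_lit_iff hf hfp hac (Or.inl ((hDR r0 hr0).2 l hl))⟩
  have hDynHead : ∀ i, 1 ≤ i → i ≤ n → ∀ r0 ∈ DR, ∀ N M : Set (PAtom F A),
      (∀ g : F, ((PAtom.flu g : PAtom F A) ∈ N ↔ PAtom.h g i ∈ M)) →
      (∀ g : F, ((PAtom.fluP g : PAtom F A) ∈ N ↔ PAtom.h g (i - 1) ∈ M)) →
      (∀ b : A, ((PAtom.act b : PAtom F A) ∈ N ↔ PAtom.occ b i ∈ M)) →
      ((mapHead (renDyn i) r0.head).redSat (ZC n aAct σ) M ↔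
        r0.head.redSat (stepModel (σ (i - 1)) (aAct i) (σ i)) N) := by
    intro i h1 h2 r0 hr0 N M hf hfp hac
    refine Head.redSat_map fun a ha => ?_
    have hfa : isFlu a := (hDR r0 hr0).1 a ha
    exact ⟨dyn_lit_iff (hDfluX i h2) (hDfluPX i h2) (hDactX i h1 h2) (Or.inr hfa),
      dyn_lit_iff hf hfp hac (Or.inr hfa)⟩
  have hGoalBody : ∀ r0 ∈ GR, ∀ N M : Set (PAtom F A),
      (∀ g : F, ((PAtom.flu g : PAtom F A) ∈ N ↔ PAtom.h g n ∈ M)) →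
      ((∀ l' ∈ mapLit (renGoal n) '' r0.body, l'.redSat (ZC n aAct σ) M) ↔
        ∀ l ∈ r0.body, l.redSat (fluSet (σ n)) N) := by
    intro r0 hr0 N M hNM
    exact body_redSat_map fun l hl =>
      ⟨goal_lit_iff hGX ((hGR r0 hr0).2 l hl), goal_lit_iff hNM ((hGR r0 hr0).2 l hl)⟩
  constructor
  · -- model of the reduct
    intro r hr hb
    rcases mem_B_iff.mp hr with hfac | hini | ⟨i, hi, hdyn⟩ | hgl | ⟨i, hi, hgen⟩ |
      ⟨i, hi, hal⟩ | hfx | hfy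
    · -- facts
      rcases hfac with ⟨i, h1, h2, rfl⟩ | ⟨b, rfl⟩
      · exact ⟨ZC_t.mpr ⟨h1, h2⟩, ZC_t.mpr ⟨h1, h2⟩⟩
      · exact ⟨ZC_action, ZC_action⟩
    · -- initial rules
      obtain ⟨r0, hr0, rfl⟩ := mem_tttInit.mp hini
      rw [replBotHead_body] at hb
      have hbody : ∀ l ∈ r0.body, l.redSat (fluSet (σ 0)) (fluSet (σ 0)) :=
        (hInitBody r0 hr0 _ _ hIX).mp hb
      have hhd := h0.1 r0 hr0 hbody
      rcases hh : r0.head with a | a | _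
      · have : replBotHead (PAtom.alpha 0) (mapRule renInit r0) =
            ⟨mapHead renInit r0.head, mapLit renInit '' r0.body⟩ := by
          show replBotHead _ ⟨mapHead renInit r0.head, _⟩ = _
          rw [hh]; rfl
        rw [this]
        exact (hInitHead r0 hr0 _ _ hIX).mpr hhd
      · have : replBotHead (PAtom.alpha 0) (mapRule renInit r0) =
            ⟨mapHead renInit r0.head, mapLit renInit '' r0.body⟩ := by
          show replBotHead _ ⟨mapHead renInit r0.head, _⟩ = _
          rw [hh]; rfl
        rw [this]
        exact (hInitHead r0 hr0 _ _ hIX).mpr hhd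
      · rw [hh] at hhd; exact hhd.elim
    · -- dynamic rules
      obtain ⟨r0, hr0, rfl⟩ := mem_tttDyn.mp hdyn
      have hbody : ∀ l ∈ r0.body, l.redSat (stepModel (σ (i - 1)) (aAct i) (σ i))
          (stepModel (σ (i - 1)) (aAct i) (σ i)) := by
        refine (hDynBody i hi.1 hi.2 r0 hr0 _ _ (hDfluX i hi.2) (hDfluPX i hi.2)
          (hDactX i hi.1 hi.2)).mp ?_
        intro l' hl'
        exact hb l' (Set.mem_union_left _ (Set.mem_union_left _ hl'))
      have hhd := (hstep i hi.1 hi.2).1 r0 (Or.inr hr0) hbody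
      exact (hDynHead i hi.1 hi.2 r0 hr0 _ _ (hDfluX i hi.2) (hDfluPX i hi.2)
        (hDactX i hi.1 hi.2)).mpr hhd
    · -- goal rules
      obtain ⟨r0, hr0, rfl⟩ := mem_tttGoal.mp hgl
      have hbody : ∀ l ∈ r0.body, l.redSat (fluSet (σ n)) (fluSet (σ n)) := by
        refine (hGoalBody r0 hr0 _ _ hGX).mp ?_
        intro l' hl'
        exact hb l' (Set.mem_union_left _ hl')
      have hhd := hgoal.1 r0 (Or.inr hr0) hbody
      rw [(hGR r0 hr0).1] at hhd
      exact absurd hhd id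
    · -- generate rules
      rcases hgen with ⟨b, rfl⟩ | ⟨b, c, hbc, rfl⟩ | rfl
      · by_cases hz : (PAtom.occ b i : PAtom F A) ∈ ZC n aAct σ
        · exact Or.inl ⟨hz, hz⟩
        · exact Or.inr ⟨hz, hz⟩
      · have h1 := (hb (Lit.pos (PAtom.occ b i)) (by simp)).1
        have h2 := (hb (Lit.pos (PAtom.occ c i)) (by simp)).1
        rw [Lit.sat] at h1 h2
        rw [ZC_occ] at h1 h2
        exact hbc (h1.2.2.trans h2.2.2.symm)
      · have h1 := (hb (Lit.neg (PAtom.occ (aAct i) i)) (by simp)).1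
        rw [Lit.sat] at h1
        exact h1 (ZC_occ.mpr ⟨hi.1, hi.2, rfl⟩)
    · -- alpha rules
      rw [alphaAt, Set.mem_singleton_iff] at hal
      subst hal
      have h1 := (hb (Lit.pos (PAtom.alpha (i - 1))) (by simp)).1
      rw [Lit.sat] at h1
      exact absurd h1 ZC_alpha
    · -- fixcons X
      rcases hfx with ⟨x, hx, rfl⟩ | ⟨x, hx, rfl⟩
      · obtain ⟨b, j, rfl⟩ := hXshape x hx
        have h1 := (hb (Lit.neg (PAtom.occ b j)) (by simp)).1
        rw [Lit.sat] at h1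
        obtain ⟨h2, h3, h4⟩ := (hXocc b j).mp hx
        exact h1 (ZC_occ.mpr ⟨h2, h3, h4⟩)
      · obtain ⟨b, j, h2, h3, rfl⟩ := hx.1
        have h1 := (hb (Lit.pos (PAtom.occ b j)) (by simp)).1
        rw [Lit.sat] at h1
        rw [ZC_occ] at h1
        exact hx.2 ((hXocc b j).mpr ⟨h2, h3, h1.2.2⟩)
    · -- fixcons Y
      rcases hfy with ⟨x, hx, rfl⟩ | ⟨x, hx, rfl⟩
      · rw [hYeq] at hx
        obtain ⟨hopen, f, hf, rfl⟩ := hx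
        have h1 := (hb (Lit.neg (PAtom.h f 0)) (by simp)).1
        rw [Lit.sat] at h1
        exact h1 (ZC_h.mpr ⟨Nat.zero_le n, hf⟩)
      · obtain ⟨f, rfl, hch⟩ := hx.1
        have h1 := (hb (Lit.pos (PAtom.h f 0)) (by simp)).1
        rw [Lit.sat] at h1
        rw [ZC_h] at h1
        have : PAtom.h f 0 ∈ Y := by
          rw [hYeq]; exact ⟨⟨f, rfl, hch⟩, f, h1.2, rfl⟩
        exact hx.2 this
  · -- minimality
    intro M hM hmod
    have hTinM : ∀ i, 1 ≤ i → i ≤ n → (PAtom.t i : PAtom F A) ∈ M := by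
      intro i h1 h2
      have := hmod ⟨Head.atom (PAtom.t i), ∅⟩
        (mem_B_iff.mpr (Or.inl (Or.inl ⟨i, h1, h2, rfl⟩)))
        (by intro l hl; simp at hl)
      exact this.2
    have hAinM : ∀ b : A, (PAtom.action b : PAtom F A) ∈ M := by
      intro b
      have := hmod ⟨Head.atom (PAtom.action b), ∅⟩
        (mem_B_iff.mpr (Or.inl (Or.inr ⟨b, rfl⟩)))
        (by intro l hl; simp at hl)
      exact this.2
    have hOinM : ∀ i, 1 ≤ i → i ≤ n → (PAtom.occ (aAct i) i : PAtom F A) ∈ M := by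
      intro i h1 h2
      have hrule : (⟨Head.choice (PAtom.occ (aAct i) i), {Lit.pos (PAtom.t i)}⟩ :
          Rule (PAtom F A)) ∈ generateAt F A i := Or.inl ⟨aAct i, rfl⟩
      have hhd := hmod _
        (mem_B_iff.mpr (Or.inr (Or.inr (Or.inr (Or.inr (Or.inl
          ⟨i, Set.mem_Icc.mpr ⟨h1, h2⟩, hrule⟩))))))
        (by rintro l hl; rw [Set.mem_singleton_iff] at hl; subst hl
            exact ⟨ZC_t.mpr ⟨h1, h2⟩, hTinM i h1 h2⟩)
      rcases hhd with ⟨_, h⟩ | ⟨h, _⟩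
      · exact h
      · exact absurd (ZC_occ.mpr ⟨h1, h2, rfl⟩) h
    have hlayer : ∀ j, j ≤ n → ∀ f ∈ σ j, (PAtom.h f j : PAtom F A) ∈ M := by
      intro j
      induction j with
      | zero =>
        intro _ f hf
        set N : Set (PAtom F A) := {x | ∃ g : F, x = PAtom.flu g ∧ PAtom.h g 0 ∈ M} with hNdef
        have hNflu : ∀ g : F, (PAtom.flu g : PAtom F A) ∈ N ↔ PAtom.h g 0 ∈ M := by
          intro g; simp [hNdef]
        have hNsub : N ⊆ fluSet (σ 0) := by
          rintro x ⟨g, rfl, hg⟩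
          have := hM hg
          rw [ZC_h] at this
          exact ⟨g, this.2, rfl⟩
        have hNmod : redModel IR (fluSet (σ 0)) N := by
          intro r0 hr0 hb0
          have hr' : replBotHead (PAtom.alpha 0) (mapRule renInit r0) ∈
              CP DR IR GR n ∪ fixcons X (OccSet F A n) ∪ fixcons Y (OpenSet IR) :=
            mem_B_iff.mpr (Or.inr (Or.inl (mem_tttInit.mpr ⟨r0, hr0, rfl⟩)))
          have hbM : ∀ l ∈ (replBotHead (PAtom.alpha 0) (mapRule renInit r0)).body,
              l.redSat (ZC n aAct σ) M := by
            rw [replBotHead_body]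
            exact (hInitBody r0 hr0 N M hNflu).mpr hb0
          have hhd := hmod _ hr' hbM
          rcases hh : r0.head with a | a | _
          · have heq : replBotHead (PAtom.alpha 0) (mapRule renInit r0) =
                ⟨mapHead renInit r0.head, mapLit renInit '' r0.body⟩ := by
              show replBotHead _ ⟨mapHead renInit r0.head, _⟩ = _
              rw [hh]; rfl
            rw [heq] at hhd
            rw [← hh]
            exact (hInitHead r0 hr0 N M hNflu).mp hhd
          · have heq : replBotHead (PAtom.alpha 0) (mapRule renInit r0) =
                ⟨mapHead renInit r0.head, mapLit renInit '' r0.body⟩ := by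
              show replBotHead _ ⟨mapHead renInit r0.head, _⟩ = _
              rw [hh]; rfl
            rw [heq] at hhd
            rw [← hh]
            exact (hInitHead r0 hr0 N M hNflu).mp hhd
          · have heq : replBotHead (PAtom.alpha 0) (mapRule renInit r0) =
                ⟨Head.atom (PAtom.alpha 0), mapLit renInit '' r0.body⟩ := by
              show replBotHead _ ⟨mapHead renInit r0.head, _⟩ = _
              rw [hh]; rfl
            rw [heq] at hhd
            exact absurd hhd.1 ZC_alpha
        have hNeq := h0.2 N hNsub hNmod
        have : (PAtom.flu f : PAtom F A) ∈ N := by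
          rw [hNeq]; exact ⟨f, hf, rfl⟩
        exact (hNflu f).mp this
      | succ j ih =>
        intro hj1 f hf
        have hj : j ≤ n := by omega
        have hstepj := hstep (j + 1) (by omega) hj1
        set N : Set (PAtom F A) := fluPSet (σ j) ∪ {PAtom.act (aAct (j + 1))} ∪
          {x | ∃ g : F, x = PAtom.flu g ∧ PAtom.h g (j + 1) ∈ M} with hNdef
        have hNflu : ∀ g : F, (PAtom.flu g : PAtom F A) ∈ N ↔ PAtom.h g (j + 1) ∈ M := by
          intro g
          simp only [hNdef, Set.mem_union, Set.mem_setOf_eq, Set.mem_singleton_iff]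
          constructor
          · rintro ((⟨g', _, hg'⟩ | hg') | ⟨g', hg', hgm⟩)
            · exact absurd hg' (by simp)
            · exact absurd hg' (by simp)
            · rw [PAtom.flu.injEq] at hg'; subst hg'; exact hgm
          · intro hg; exact Or.inr ⟨g, rfl, hg⟩
        have hNfluP : ∀ g : F, (PAtom.fluP g : PAtom F A) ∈ N ↔
            PAtom.h g (j + 1 - 1) ∈ M := by
          intro g
          simp only [Nat.add_sub_cancel]
          simp only [hNdef, Set.mem_union, Set.mem_setOf_eq, Set.mem_singleton_iff]
          constructor
          · rintro ((⟨g', hg', heq⟩ | hg') | ⟨g', hg', hgm⟩)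
            · rw [PAtom.fluP.injEq] at heq
              exact ih hj g (heq ▸ hg')
            · exact absurd hg' (by simp)
            · exact absurd hg' (by simp)
          · intro hg
            have := hM hg
            rw [ZC_h] at this
            exact Or.inl (Or.inl ⟨g, this.2, rfl⟩)
        have hNact : ∀ b : A, (PAtom.act b : PAtom F A) ∈ N ↔
            PAtom.occ b (j + 1) ∈ M := by
          intro b
          simp only [hNdef, Set.mem_union, Set.mem_setOf_eq, Set.mem_singleton_iff]
          constructor
          · rintro ((⟨g', _, hg'⟩ | hg') | ⟨g', hg', _⟩)
            · exact absurd hg' (by simp)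
            · rw [PAtom.act.injEq] at hg'
              exact hg' ▸ hOinM (j + 1) (by omega) hj1
            · exact absurd hg' (by simp)
          · intro hg
            have := hM hg
            rw [ZC_occ] at this
            exact Or.inl (Or.inr (by rw [this.2.2]))
        have hNsub : N ⊆ stepModel (σ (j + 1 - 1)) (aAct (j + 1)) (σ (j + 1)) := by
          simp only [Nat.add_sub_cancel]
          rintro x ((hx | hx) | ⟨g, rfl, hg⟩)
          · exact Or.inl (Or.inl hx)
          · exact Or.inl (Or.inr hx)
          · have := hM hg
            rw [ZC_h] at this
            exact Or.inr ⟨g, this.2, rfl⟩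
        have hNmod : redModel (stepProg DR (σ (j + 1 - 1)) (aAct (j + 1)))
            (stepModel (σ (j + 1 - 1)) (aAct (j + 1)) (σ (j + 1))) N := by
          intro r0 hr0 hb0
          rcases hr0 with (hr0 | hr0) | hr0
          · obtain ⟨y, ⟨g, hg, rfl⟩, rfl⟩ := hr0
            simp only [Nat.add_sub_cancel] at hg ⊢
            exact ⟨mem_stepModel_fluP.mpr hg, Or.inl (Or.inl ⟨g, hg, rfl⟩)⟩
          · rw [actProg, Set.mem_singleton_iff] at hr0
            subst hr0
            exact ⟨mem_stepModel_act.mpr rfl, Or.inl (Or.inr rfl)⟩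
          · have hr' : (⟨mapHead (renDyn (j + 1)) r0.head,
                (mapLit (renDyn (j + 1)) '' r0.body ∪ {Lit.pos (PAtom.t (j + 1))}) ∪
                  {Lit.neg (PAtom.alpha (j + 1))}⟩ : Rule (PAtom F A)) ∈
                CP DR IR GR n ∪ fixcons X (OccSet F A n) ∪ fixcons Y (OpenSet IR) :=
              mem_B_iff.mpr (Or.inr (Or.inr (Or.inl ⟨j + 1, Set.mem_Icc.mpr ⟨by omega, hj1⟩,
                mem_tttDyn.mpr ⟨r0, hr0, rfl⟩⟩)))
            have hbM : ∀ l ∈ (mapLit (renDyn (j + 1)) '' r0.body ∪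
                {Lit.pos (PAtom.t (j + 1))}) ∪ {Lit.neg (PAtom.alpha (j + 1))},
                l.redSat (ZC n aAct σ) M := by
              rintro l ((hl | hl) | hl)
              · exact (hDynBody (j + 1) (by omega) hj1 r0 hr0 N M hNflu hNfluP hNact).mpr
                  hb0 l hl
              · rw [Set.mem_singleton_iff] at hl; subst hl
                exact ⟨ZC_t.mpr ⟨by omega, hj1⟩, hTinM (j + 1) (by omega) hj1⟩
              · rw [Set.mem_singleton_iff] at hl; subst hl
                exact ⟨ZC_alpha, fun hc => ZC_alpha (hM hc)⟩
            have hhd := hmod _ hr' hbM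
            exact (hDynHead (j + 1) (by omega) hj1 r0 hr0 N M hNflu hNfluP hNact).mp hhd
        have hNeq := hstepj.2 N hNsub hNmod
        have : (PAtom.flu f : PAtom F A) ∈ N := by
          rw [hNeq]
          exact mem_stepModel_flu.mpr hf
        exact (hNflu f).mp this
    refine Set.Subset.antisymm hM ?_
    rintro x (⟨i, h1, h2, rfl⟩ | ⟨b, rfl⟩ | ⟨i, h1, h2, rfl⟩ | ⟨f, i, h1, h2, rfl⟩)
    · exact hTinM i h1 h2
    · exact hAinM b
    · exact hOinM i h1 h2
    · exact hlayer i h1 f h2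

end ASP
namespace ASP

universe u' v'
variable {F : Type u'} {A : Type v'}

lemma headAtomIs_bot {B : Set (Lit (PAtom F A))} {q : PAtom F A}
    (hh : headAtomIs ⟨Head.bot, B⟩ q) : False := by
  rcases hh with hh | hh <;> simp at hh

lemma headAtom_cases {DR IR GR : Program (PAtom F A)} (hDR : DynRules DR) (hIR : InitRules IR)
    (hGR : GoalRules GR) {n : ℕ} {X Y : Set (PAtom F A)} {r : Rule (PAtom F A)}
    (hr : r ∈ CP DR IR GR n ∪ fixcons X (OccSet F A n) ∪ fixcons Y (OpenSet IR))
    {q : PAtom F A} (hh : headAtomIs r q) :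
    (∃ i, 1 ≤ i ∧ i ≤ n ∧ q = PAtom.t i) ∨ (∃ b : A, q = PAtom.action b) ∨
    (∃ (b : A) (i : ℕ), 1 ≤ i ∧ i ≤ n ∧ q = PAtom.occ b i) ∨
    (∃ f : F, q = PAtom.h f 0 ∧ r ∈ tttInit IR) ∨
    (∃ (f : F) (i : ℕ), 1 ≤ i ∧ i ≤ n ∧ q = PAtom.h f i ∧ r ∈ tttDyn DR i) ∨
    (q = PAtom.alpha 0 ∧ r ∈ tttInit IR) ∨
    (∃ i, 1 ≤ i ∧ i ≤ n ∧ q = PAtom.alpha i) := by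
  rcases mem_B_iff.mp hr with hfac | hini | ⟨i, hi, hdyn⟩ | hgl | ⟨i, hi, hgen⟩ |
    ⟨i, hi, hal⟩ | hfx | hfy
  · rcases hfac with ⟨i, h1, h2, rfl⟩ | ⟨b, rfl⟩
    · rcases hh with hh | hh
      · rw [Head.atom.injEq] at hh
        exact Or.inl ⟨i, h1, h2, hh.symm⟩
      · exact absurd hh (by simp)
    · rcases hh with hh | hh
      · rw [Head.atom.injEq] at hh
        exact Or.inr (Or.inl ⟨b, hh.symm⟩)
      · exact absurd hh (by simp)
  · obtain ⟨r0, hr0, rfl⟩ := mem_tttInit.mp hini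
    rcases hh0 : r0.head with a | a | _
    · have : isFlu a := (hIR r0 hr0).1 a (Or.inl hh0)
      cases a <;> simp [isFlu] at this
      case flu f =>
        have heq : replBotHead (PAtom.alpha 0) (mapRule renInit r0) =
            ⟨Head.atom (PAtom.h f 0), mapLit renInit '' r0.body⟩ := by
          show replBotHead _ ⟨mapHead renInit r0.head, _⟩ = _
          rw [hh0]; rfl
        rw [heq] at hh
        rcases hh with hh | hh
        · rw [Head.atom.injEq] at hh
          exact Or.inr (Or.inr (Or.inr (Or.inl ⟨f, hh.symm, hini⟩)))
        · exact absurd hh (by simp)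
    · have : isFlu a := (hIR r0 hr0).1 a (Or.inr hh0)
      cases a <;> simp [isFlu] at this
      case flu f =>
        have heq : replBotHead (PAtom.alpha 0) (mapRule renInit r0) =
            ⟨Head.choice (PAtom.h f 0), mapLit renInit '' r0.body⟩ := by
          show replBotHead _ ⟨mapHead renInit r0.head, _⟩ = _
          rw [hh0]; rfl
        rw [heq] at hh
        rcases hh with hh | hh
        · exact absurd hh (by simp)
        · rw [Head.choice.injEq] at hh
          exact Or.inr (Or.inr (Or.inr (Or.inl ⟨f, hh.symm, hini⟩)))
    · have heq : replBotHead (PAtom.alpha 0) (mapRule renInit r0) =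
          ⟨Head.atom (PAtom.alpha 0), mapLit renInit '' r0.body⟩ := by
        show replBotHead _ ⟨mapHead renInit r0.head, _⟩ = _
        rw [hh0]; rfl
      rw [heq] at hh
      rcases hh with hh | hh
      · rw [Head.atom.injEq] at hh
        exact Or.inr (Or.inr (Or.inr (Or.inr (Or.inr (Or.inl ⟨hh.symm, hini⟩)))))
      · exact absurd hh (by simp)
  · obtain ⟨r0, hr0, rfl⟩ := mem_tttDyn.mp hdyn
    rw [Set.mem_Icc] at hi
    rcases hh0 : r0.head with a | a | _
    · have : isFlu a := (hDR r0 hr0).1 a (Or.inl hh0)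
      cases a <;> simp [isFlu] at this
      case flu f =>
        rw [hh0] at hh
        simp only [mapHead, renDyn] at hh
        rcases hh with hh | hh
        · rw [Head.atom.injEq] at hh
          exact Or.inr (Or.inr (Or.inr (Or.inr (Or.inl ⟨f, i, hi.1, hi.2, hh.symm, hh0 ▸ hdyn⟩))))
        · exact absurd hh (by simp)
    · have : isFlu a := (hDR r0 hr0).1 a (Or.inr hh0)
      cases a <;> simp [isFlu] at this
      case flu f =>
        rw [hh0] at hh
        simp only [mapHead, renDyn] at hh
        rcases hh with hh | hh
        · exact absurd hh (by simp)
        · rw [Head.choice.injEq] at hh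
          exact Or.inr (Or.inr (Or.inr (Or.inr (Or.inl ⟨f, i, hi.1, hi.2, hh.symm, hh0 ▸ hdyn⟩))))
    · rw [hh0] at hh
      simp only [mapHead] at hh
      rcases hh with hh | hh <;> exact absurd hh (by simp)
  · obtain ⟨r0, hr0, rfl⟩ := mem_tttGoal.mp hgl
    rw [(hGR r0 hr0).1] at hh
    simp only [mapHead] at hh
    rcases hh with hh | hh <;> exact absurd hh (by simp)
  · rw [Set.mem_Icc] at hi
    rcases hgen with ⟨b, rfl⟩ | ⟨b, c, hbc, rfl⟩ | rfl
    · rcases hh with hh | hh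
      · exact absurd hh (by simp)
      · rw [Head.choice.injEq] at hh
        exact Or.inr (Or.inr (Or.inl ⟨b, i, hi.1, hi.2, hh.symm⟩))
    · exact absurd hh headAtomIs_bot
    · exact absurd hh headAtomIs_bot
  · rw [Set.mem_Icc] at hi
    rw [alphaAt, Set.mem_singleton_iff] at hal
    subst hal
    rcases hh with hh | hh
    · rw [Head.atom.injEq] at hh
      exact Or.inr (Or.inr (Or.inr (Or.inr (Or.inr (Or.inr ⟨i, hi.1, hi.2, hh.symm⟩)))))
    · exact absurd hh (by simp)
  · rcases hfx with ⟨x, hx, rfl⟩ | ⟨x, hx, rfl⟩ <;> exact absurd hh headAtomIs_bot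
  · rcases hfy with ⟨x, hx, rfl⟩ | ⟨x, hx, rfl⟩ <;> exact absurd hh headAtomIs_bot

end ASP
namespace ASP

universe u' v'
variable {F : Type u'} {A : Type v'}

set_option maxHeartbeats 2000000 in
theorem Z_extract [Nonempty F] [Nonempty A]
    {DR IR GR : Program (PAtom F A)} (hDR : DynRules DR) (hIR : InitRules IR)
    (hGR : GoalRules GR) {n : ℕ} (hn : 1 ≤ n) {aAct : ℕ → A} {X Y : Set (PAtom F A)}
    (hXocc : ∀ (b : A) (j : ℕ), PAtom.occ b j ∈ X ↔ 1 ≤ j ∧ j ≤ n ∧ b = aAct j)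
    (hY : Y ⊆ OpenSet IR) {Z : Set (PAtom F A)}
    (hZ : StableModel (CP DR IR GR n ∪ fixcons X (OccSet F A n) ∪ fixcons Y (OpenSet IR)) Z)
    (hα : PAtom.alpha n ∉ Z) :
    StableModel IR (fluSet {f : F | PAtom.h f 0 ∈ Z}) ∧
    (∀ i, 1 ≤ i → i ≤ n →
      StableModel (stepProg DR {f : F | PAtom.h f (i - 1) ∈ Z} (aAct i))
        (stepModel {f : F | PAtom.h f (i - 1) ∈ Z} (aAct i) {f : F | PAtom.h f i ∈ Z})) ∧
    StableModel (choiceAllFlu F A ∪ GR) (fluSet {f : F | PAtom.h f n ∈ Z}) ∧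
    Y = {x ∈ OpenSet IR | ∃ f ∈ {f : F | PAtom.h f 0 ∈ Z}, x = PAtom.h f 0} := by
  set σ : ℕ → Set F := fun j => {f : F | PAtom.h f j ∈ Z} with hσdef
  have hT : ∀ i, 1 ≤ i → i ≤ n → (PAtom.t i : PAtom F A) ∈ Z := fun i h1 h2 =>
    mem_of_fact hZ (mem_B_iff.mpr (Or.inl (Or.inl ⟨i, h1, h2, rfl⟩)))
  have hαn : ∀ j, j ≤ n → (PAtom.alpha j : PAtom F A) ∉ Z := by
    intro j hj hjZ
    have climb : ∀ d, j + d ≤ n → (PAtom.alpha (j + d) : PAtom F A) ∈ Z := by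
      intro d
      induction d with
      | zero => intro _; exact hjZ
      | succ d ihd =>
        intro hd
        have h1 := ihd (by omega)
        have hrule : (⟨Head.atom (PAtom.alpha (j + d + 1)),
            {Lit.pos (PAtom.t (j + d + 1)), Lit.pos (PAtom.alpha (j + d + 1 - 1))}⟩ :
            Rule (PAtom F A)) ∈
            CP DR IR GR n ∪ fixcons X (OccSet F A n) ∪ fixcons Y (OpenSet IR) :=
          mem_B_iff.mpr (Or.inr (Or.inr (Or.inr (Or.inr (Or.inr (Or.inl
            ⟨j + d + 1, Set.mem_Icc.mpr ⟨by omega, by omega⟩, rfl⟩))))))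
        have hred := hZ.1 _ hrule (by
          intro l hl
          simp only [Set.mem_insert_iff, Set.mem_singleton_iff] at hl
          rcases hl with rfl | rfl
          · exact ⟨hT _ (by omega) (by omega), hT _ (by omega) (by omega)⟩
          · have he : j + d + 1 - 1 = j + d := by omega
            rw [he]
            exact ⟨h1, h1⟩)
        exact hred.1
    have := climb (n - j) (by omega)
    rw [show j + (n - j) = n by omega] at this
    exact hα this
  have hocc : ∀ (b : A) (j : ℕ), (PAtom.occ b j : PAtom F A) ∈ Z ↔
      1 ≤ j ∧ j ≤ n ∧ b = aAct j := by
    intro b j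
    constructor
    · intro hbZ
      obtain ⟨r, hr, hh⟩ := exists_head_of_mem hZ hbZ
      rcases headAtom_cases hDR hIR hGR hr hh with ⟨i, _, _, he⟩ | ⟨b', he⟩ |
        ⟨b', i, h1, h2, he⟩ | ⟨f, he, _⟩ | ⟨f, i, _, _, he, _⟩ | ⟨he, _⟩ | ⟨i, _, _, he⟩
      · exact absurd he (by simp)
      · exact absurd he (by simp)
      · rw [PAtom.occ.injEq] at he
        obtain ⟨rfl, rfl⟩ := he
        refine ⟨h1, h2, ?_⟩
        by_cases hX : (PAtom.occ b j : PAtom F A) ∈ X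
        · exact ((hXocc b j).mp hX).2.2
        · exfalso
          have hrule : (⟨Head.bot, {Lit.pos (PAtom.occ b j)}⟩ : Rule (PAtom F A)) ∈
              CP DR IR GR n ∪ fixcons X (OccSet F A n) ∪ fixcons Y (OpenSet IR) :=
            mem_B_iff.mpr (Or.inr (Or.inr (Or.inr (Or.inr (Or.inr (Or.inr (Or.inl
              (Or.inr ⟨PAtom.occ b j, ⟨⟨b, j, h1, h2, rfl⟩, hX⟩, rfl⟩))))))))
          exact constraint_fail hZ hrule (by
            intro l hl
            rw [Set.mem_singleton_iff] at hl
            subst hl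
            exact ⟨hbZ, hbZ⟩)
      · exact absurd he (by simp)
      · exact absurd he (by simp)
      · exact absurd he (by simp)
      · exact absurd he (by simp)
    · rintro ⟨h1, h2, rfl⟩
      have hxX : (PAtom.occ (aAct j) j : PAtom F A) ∈ X := (hXocc _ j).mpr ⟨h1, h2, rfl⟩
      have hrule : (⟨Head.bot, {Lit.neg (PAtom.occ (aAct j) j)}⟩ : Rule (PAtom F A)) ∈
          CP DR IR GR n ∪ fixcons X (OccSet F A n) ∪ fixcons Y (OpenSet IR) :=
        mem_B_iff.mpr (Or.inr (Or.inr (Or.inr (Or.inr (Or.inr (Or.inr (Or.inl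
          (Or.inl ⟨_, hxX, rfl⟩))))))))
      by_contra hc
      exact constraint_fail hZ hrule (by
        intro l hl
        rw [Set.mem_singleton_iff] at hl
        subst hl
        exact ⟨hc, hc⟩)
  -- transfer iffs, Z side
  have hIX : ∀ g : F, ((PAtom.flu g : PAtom F A) ∈ fluSet (σ 0)) ↔ PAtom.h g 0 ∈ Z := by
    intro g; rw [mem_fluSet]; exact Iff.rfl
  have hGX : ∀ g : F, ((PAtom.flu g : PAtom F A) ∈ fluSet (σ n)) ↔ PAtom.h g n ∈ Z := by
    intro g; rw [mem_fluSet]; exact Iff.rfl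
  have hDfluX : ∀ i, ∀ g : F,
      ((PAtom.flu g : PAtom F A) ∈ stepModel (σ (i - 1)) (aAct i) (σ i)) ↔
        PAtom.h g i ∈ Z := by
    intro i g; rw [mem_stepModel_flu]; exact Iff.rfl
  have hDfluPX : ∀ i, ∀ g : F,
      ((PAtom.fluP g : PAtom F A) ∈ stepModel (σ (i - 1)) (aAct i) (σ i)) ↔
        PAtom.h g (i - 1) ∈ Z := by
    intro i g; rw [mem_stepModel_fluP]; exact Iff.rfl
  have hDactX : ∀ i, 1 ≤ i → i ≤ n → ∀ b : A,
      ((PAtom.act b : PAtom F A) ∈ stepModel (σ (i - 1)) (aAct i) (σ i)) ↔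
        PAtom.occ b i ∈ Z := by
    intro i h1 h2 b
    rw [mem_stepModel_act, hocc]
    constructor
    · rintro rfl; exact ⟨h1, h2, rfl⟩
    · rintro ⟨_, _, rfl⟩; rfl
  -- body/head transfers
  have hInitBody : ∀ r0 ∈ IR, ∀ N M : Set (PAtom F A),
      (∀ g : F, ((PAtom.flu g : PAtom F A) ∈ N ↔ PAtom.h g 0 ∈ M)) →
      ((∀ l' ∈ mapLit renInit '' r0.body, l'.redSat Z M) ↔
        ∀ l ∈ r0.body, l.redSat (fluSet (σ 0)) N) := by
    intro r0 hr0 N M hNM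
    exact body_redSat_map fun l hl =>
      ⟨init_lit_iff hIX ((hIR r0 hr0).2 l hl), init_lit_iff hNM ((hIR r0 hr0).2 l hl)⟩
  have hInitHead : ∀ r0 ∈ IR, ∀ N M : Set (PAtom F A),
      (∀ g : F, ((PAtom.flu g : PAtom F A) ∈ N ↔ PAtom.h g 0 ∈ M)) →
      ((mapHead renInit r0.head).redSat Z M ↔ r0.head.redSat (fluSet (σ 0)) N) := by
    intro r0 hr0 N M hNM
    refine Head.redSat_map fun a ha => ?_
    have hf : isFlu a := (hIR r0 hr0).1 a ha
    exact ⟨init_lit_iff hIX hf, init_lit_iff hNM hf⟩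
  have hDynBody : ∀ i, 1 ≤ i → i ≤ n → ∀ r0 ∈ DR, ∀ N M : Set (PAtom F A),
      (∀ g : F, ((PAtom.flu g : PAtom F A) ∈ N ↔ PAtom.h g i ∈ M)) →
      (∀ g : F, ((PAtom.fluP g : PAtom F A) ∈ N ↔ PAtom.h g (i - 1) ∈ M)) →
      (∀ b : A, ((PAtom.act b : PAtom F A) ∈ N ↔ PAtom.occ b i ∈ M)) →
      ((∀ l' ∈ mapLit (renDyn i) '' r0.body, l'.redSat Z M) ↔
        ∀ l ∈ r0.body, l.redSat (stepModel (σ (i - 1)) (aAct i) (σ i)) N) := by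
    intro i h1 h2 r0 hr0 N M hf hfp hac
    exact body_redSat_map fun l hl =>
      ⟨dyn_lit_iff (hDfluX i) (hDfluPX i) (hDactX i h1 h2) (Or.inl ((hDR r0 hr0).2 l hl)),
       dyn_lit_iff hf hfp hac (Or.inl ((hDR r0 hr0).2 l hl))⟩
  have hDynHead : ∀ i, 1 ≤ i → i ≤ n → ∀ r0 ∈ DR, ∀ N M : Set (PAtom F A),
      (∀ g : F, ((PAtom.flu g : PAtom F A) ∈ N ↔ PAtom.h g i ∈ M)) →
      (∀ g : F, ((PAtom.fluP g : PAtom F A) ∈ N ↔ PAtom.h g (i - 1) ∈ M)) →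
      (∀ b : A, ((PAtom.act b : PAtom F A) ∈ N ↔ PAtom.occ b i ∈ M)) →
      ((mapHead (renDyn i) r0.head).redSat Z M ↔
        r0.head.redSat (stepModel (σ (i - 1)) (aAct i) (σ i)) N) := by
    intro i h1 h2 r0 hr0 N M hf hfp hac
    refine Head.redSat_map fun a ha => ?_
    have hfa : isFlu a := (hDR r0 hr0).1 a ha
    exact ⟨dyn_lit_iff (hDfluX i) (hDfluPX i) (hDactX i h1 h2) (Or.inr hfa),
      dyn_lit_iff hf hfp hac (Or.inr hfa)⟩
  have hGoalBody : ∀ r0 ∈ GR,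
      ((∀ l' ∈ mapLit (renGoal n) '' r0.body, l'.redSat Z Z) ↔
        ∀ l ∈ r0.body, l.redSat (fluSet (σ n)) (fluSet (σ n))) := by
    intro r0 hr0
    exact body_redSat_map fun l hl =>
      ⟨goal_lit_iff hGX ((hGR r0 hr0).2 l hl), goal_lit_iff hGX ((hGR r0 hr0).2 l hl)⟩
  refine ⟨?_, ?_, ?_, ?_⟩
  · -- initial layer is a stable model of IR
    constructor
    · intro r0 hr0 hb0
      have hr' : replBotHead (PAtom.alpha 0) (mapRule renInit r0) ∈
          CP DR IR GR n ∪ fixcons X (OccSet F A n) ∪ fixcons Y (OpenSet IR) :=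
        mem_B_iff.mpr (Or.inr (Or.inl (mem_tttInit.mpr ⟨r0, hr0, rfl⟩)))
      have hbZ : ∀ l ∈ (replBotHead (PAtom.alpha 0) (mapRule renInit r0)).body,
          l.redSat Z Z := by
        rw [replBotHead_body]
        exact (hInitBody r0 hr0 _ _ hIX).mpr hb0
      have hhd := hZ.1 _ hr' hbZ
      rcases hh : r0.head with a | a | _
      · have heq : replBotHead (PAtom.alpha 0) (mapRule renInit r0) =
            ⟨mapHead renInit r0.head, mapLit renInit '' r0.body⟩ := by
          show replBotHead _ ⟨mapHead renInit r0.head, _⟩ = _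
          rw [hh]; rfl
        rw [heq] at hhd
        rw [← hh]
        exact (hInitHead r0 hr0 _ _ hIX).mp hhd
      · have heq : replBotHead (PAtom.alpha 0) (mapRule renInit r0) =
            ⟨mapHead renInit r0.head, mapLit renInit '' r0.body⟩ := by
          show replBotHead _ ⟨mapHead renInit r0.head, _⟩ = _
          rw [hh]; rfl
        rw [heq] at hhd
        rw [← hh]
        exact (hInitHead r0 hr0 _ _ hIX).mp hhd
      · have heq : replBotHead (PAtom.alpha 0) (mapRule renInit r0) =
            ⟨Head.atom (PAtom.alpha 0), mapLit renInit '' r0.body⟩ := by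
          show replBotHead _ ⟨mapHead renInit r0.head, _⟩ = _
          rw [hh]; rfl
        rw [heq] at hhd
        exact absurd hhd.1 (hαn 0 (Nat.zero_le n))
    · intro N hN hNmod
      set M' : Set (PAtom F A) :=
        {x ∈ Z | ∀ g : F, x = PAtom.h g 0 → PAtom.flu g ∈ N} with hM'def
      have hM'sub : M' ⊆ Z := fun x hx => hx.1
      have hM'h0 : ∀ g : F, (PAtom.h g 0 : PAtom F A) ∈ M' ↔ (PAtom.flu g : PAtom F A) ∈ N := by
        intro g
        constructor
        · intro hx; exact hx.2 g rfl
        · intro hg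
          have hZ0 : (PAtom.h g 0 : PAtom F A) ∈ Z := by
            have := hN hg
            rw [mem_fluSet] at this
            exact this
          refine ⟨hZ0, fun g' he => ?_⟩
          rw [PAtom.h.injEq] at he
          exact he.1 ▸ hg
      have hM'keep : ∀ q ∈ Z, (∀ g : F, q ≠ PAtom.h g 0) → q ∈ M' :=
        fun q hq hne => ⟨hq, fun g he => absurd he (hne g)⟩
      have hlift : redModel (CP DR IR GR n ∪ fixcons X (OccSet F A n) ∪
          fixcons Y (OpenSet IR)) Z M' := by
        intro r hr hb
        by_cases hri : r ∈ tttInit IR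
        · obtain ⟨r0, hr0, rfl⟩ := mem_tttInit.mp hri
          rw [replBotHead_body] at hb
          have hb0 : ∀ l ∈ r0.body, l.redSat (fluSet (σ 0)) N :=
            (hInitBody r0 hr0 N M' (fun g => (hM'h0 g).symm)).mp hb
          have hhd := hNmod r0 hr0 hb0
          rcases hh : r0.head with a | a | _
          · have heq : replBotHead (PAtom.alpha 0) (mapRule renInit r0) =
                ⟨mapHead renInit r0.head, mapLit renInit '' r0.body⟩ := by
              show replBotHead _ ⟨mapHead renInit r0.head, _⟩ = _
              rw [hh]; rfl
            rw [heq]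
            exact (hInitHead r0 hr0 N M' (fun g => (hM'h0 g).symm)).mpr hhd
          · have heq : replBotHead (PAtom.alpha 0) (mapRule renInit r0) =
                ⟨mapHead renInit r0.head, mapLit renInit '' r0.body⟩ := by
              show replBotHead _ ⟨mapHead renInit r0.head, _⟩ = _
              rw [hh]; rfl
            rw [heq]
            exact (hInitHead r0 hr0 N M' (fun g => (hM'h0 g).symm)).mpr hhd
          · rw [hh] at hhd
            exact hhd.elim
        · have hZZ := hZ.1 r hr (fun l hl => redSat_self (hb l hl))
          refine head_lift hM'sub ?_ hZZ
          intro a ha haZ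
          rcases headAtom_cases hDR hIR hGR hr ha with ⟨i, h1, _, rfl⟩ | ⟨b, rfl⟩ |
            ⟨b, i, h1, h2, rfl⟩ | ⟨f, rfl, hmem⟩ | ⟨f, i, h1, _, rfl, _⟩ | ⟨rfl, hmem⟩ |
            ⟨i, h1, _, rfl⟩
          · exact hM'keep _ haZ (fun g => by simp)
          · exact hM'keep _ haZ (fun g => by simp)
          · exact hM'keep _ haZ (fun g => by simp)
          · exact absurd hmem hri
          · refine hM'keep _ haZ (fun g he => ?_)
            rw [PAtom.h.injEq] at he
            omega
          · exact absurd hmem hri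
          · exact hM'keep _ haZ (fun g => by simp)
      have hM'eq := hZ.2 M' hM'sub hlift
      refine Set.Subset.antisymm hN ?_
      rintro x ⟨g, hg, rfl⟩
      have : (PAtom.h g 0 : PAtom F A) ∈ M' := by rw [hM'eq]; exact hg
      exact (hM'h0 g).mp this
  · -- step layers
    intro i h1 h2
    constructor
    · intro r0 hr0 hb0
      rcases hr0 with (hr0 | hr0) | hr0
      · obtain ⟨y, ⟨g, hg, rfl⟩, rfl⟩ := hr0
        exact ⟨mem_stepModel_fluP.mpr hg, mem_stepModel_fluP.mpr hg⟩
      · rw [actProg, Set.mem_singleton_iff] at hr0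
        subst hr0
        exact ⟨mem_stepModel_act.mpr rfl, mem_stepModel_act.mpr rfl⟩
      · have hr' : (⟨mapHead (renDyn i) r0.head,
            (mapLit (renDyn i) '' r0.body ∪ {Lit.pos (PAtom.t i)}) ∪
              {Lit.neg (PAtom.alpha i)}⟩ : Rule (PAtom F A)) ∈
            CP DR IR GR n ∪ fixcons X (OccSet F A n) ∪ fixcons Y (OpenSet IR) :=
          mem_B_iff.mpr (Or.inr (Or.inr (Or.inl ⟨i, Set.mem_Icc.mpr ⟨h1, h2⟩,
            mem_tttDyn.mpr ⟨r0, hr0, rfl⟩⟩)))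
        have hbZ : ∀ l ∈ (mapLit (renDyn i) '' r0.body ∪ {Lit.pos (PAtom.t i)}) ∪
            {Lit.neg (PAtom.alpha i)}, l.redSat Z Z := by
          rintro l ((hl | hl) | hl)
          · exact (hDynBody i h1 h2 r0 hr0 _ _ (hDfluX i) (hDfluPX i)
              (hDactX i h1 h2)).mpr hb0 l hl
          · rw [Set.mem_singleton_iff] at hl; subst hl
            exact ⟨hT i h1 h2, hT i h1 h2⟩
          · rw [Set.mem_singleton_iff] at hl; subst hl
            exact ⟨hαn i h2, hαn i h2⟩
        have hhd := hZ.1 _ hr' hbZ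
        exact (hDynHead i h1 h2 r0 hr0 _ _ (hDfluX i) (hDfluPX i) (hDactX i h1 h2)).mp hhd
    · intro N hN hNmod
      have hNfluP : ∀ g : F, g ∈ σ (i - 1) → (PAtom.fluP g : PAtom F A) ∈ N := by
        intro g hg
        exact (hNmod ⟨Head.atom (PAtom.fluP g), ∅⟩ (Or.inl (Or.inl ⟨_, ⟨g, hg, rfl⟩, rfl⟩))
          (by intro l hl; simp at hl)).2
      have hNact : (PAtom.act (aAct i) : PAtom F A) ∈ N :=
        (hNmod ⟨Head.atom (PAtom.act (aAct i)), ∅⟩ (Or.inl (Or.inr rfl))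
          (by intro l hl; simp at hl)).2
      set M' : Set (PAtom F A) :=
        {x ∈ Z | ∀ g : F, x = PAtom.h g i → PAtom.flu g ∈ N} with hM'def
      have hM'sub : M' ⊆ Z := fun x hx => hx.1
      have hM'keep : ∀ q ∈ Z, (∀ g : F, q ≠ PAtom.h g i) → q ∈ M' :=
        fun q hq hne => ⟨hq, fun g he => absurd he (hne g)⟩
      have hM'flu : ∀ g : F, (PAtom.flu g : PAtom F A) ∈ N ↔ PAtom.h g i ∈ M' := by
        intro g
        constructor
        · intro hg
          have hgZ : (PAtom.h g i : PAtom F A) ∈ Z := by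
            have := hN hg
            rw [mem_stepModel_flu] at this
            exact this
          refine ⟨hgZ, fun g' he => ?_⟩
          rw [PAtom.h.injEq] at he
          exact he.1 ▸ hg
        · intro hx; exact hx.2 g rfl
      have hM'fluP : ∀ g : F, (PAtom.fluP g : PAtom F A) ∈ N ↔ PAtom.h g (i - 1) ∈ M' := by
        intro g
        constructor
        · intro hg
          have := hN hg
          rw [mem_stepModel_fluP] at this
          refine ⟨this, fun g' he => ?_⟩
          rw [PAtom.h.injEq] at he
          omega
        · intro hx
          have := hx.1
          exact hNfluP g this
      have hM'act : ∀ b : A, (PAtom.act b : PAtom F A) ∈ N ↔ PAtom.occ b i ∈ M' := by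
        intro b
        constructor
        · intro hg
          have := hN hg
          rw [mem_stepModel_act] at this
          subst this
          exact hM'keep _ ((hocc _ i).mpr ⟨h1, h2, rfl⟩) (fun g => by simp)
        · intro hx
          have := (hocc b i).mp hx.1
          exact this.2.2 ▸ hNact
      have hlift : redModel (CP DR IR GR n ∪ fixcons X (OccSet F A n) ∪
          fixcons Y (OpenSet IR)) Z M' := by
        intro r hr hb
        by_cases hri : r ∈ tttDyn DR i
        · obtain ⟨r0, hr0, rfl⟩ := mem_tttDyn.mp hri
          have hb0 : ∀ l ∈ r0.body, l.redSat (stepModel (σ (i - 1)) (aAct i) (σ i)) N := by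
            refine (hDynBody i h1 h2 r0 hr0 N M' hM'flu hM'fluP hM'act).mp ?_
            intro l' hl'
            exact hb l' (Set.mem_union_left _ (Set.mem_union_left _ hl'))
          have hhd := hNmod r0 (Or.inr hr0) hb0
          exact (hDynHead i h1 h2 r0 hr0 N M' hM'flu hM'fluP hM'act).mpr hhd
        · have hZZ := hZ.1 r hr (fun l hl => redSat_self (hb l hl))
          refine head_lift hM'sub ?_ hZZ
          intro a ha haZ
          rcases headAtom_cases hDR hIR hGR hr ha with ⟨i', h1', _, rfl⟩ | ⟨b, rfl⟩ |
            ⟨b, i', h1', h2', rfl⟩ | ⟨f, rfl, hmem⟩ | ⟨f, i', h1', _, rfl, hmem⟩ |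
            ⟨rfl, hmem⟩ | ⟨i', h1', _, rfl⟩
          · exact hM'keep _ haZ (fun g => by simp)
          · exact hM'keep _ haZ (fun g => by simp)
          · exact hM'keep _ haZ (fun g => by simp)
          · refine hM'keep _ haZ (fun g he => ?_)
            rw [PAtom.h.injEq] at he
            omega
          · by_cases hii : i' = i
            · exact absurd (hii ▸ hmem) hri
            · refine hM'keep _ haZ (fun g he => ?_)
              rw [PAtom.h.injEq] at he
              exact hii he.2
          · exact hM'keep _ haZ (fun g => by simp)
          · exact hM'keep _ haZ (fun g => by simp)
      have hM'eq := hZ.2 M' hM'sub hlift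
      refine Set.Subset.antisymm hN ?_
      rintro x ((⟨g, hg, rfl⟩ | rfl) | ⟨g, hg, rfl⟩)
      · exact hNfluP g hg
      · exact hNact
      · have : (PAtom.h g i : PAtom F A) ∈ M' := by rw [hM'eq]; exact hg
        exact this.2 g rfl
  · -- goal layer
    rw [goal_stable_iff hGR]
    intro r0 hr0 hb0
    have hr' : (⟨mapHead (renGoal n) r0.head,
        mapLit (renGoal n) '' r0.body ∪ {Lit.neg (PAtom.alpha n)}⟩ : Rule (PAtom F A)) ∈
        CP DR IR GR n ∪ fixcons X (OccSet F A n) ∪ fixcons Y (OpenSet IR) :=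
      mem_B_iff.mpr (Or.inr (Or.inr (Or.inr (Or.inl (mem_tttGoal.mpr ⟨r0, hr0, rfl⟩)))))
    have hbZ : ∀ l ∈ mapLit (renGoal n) '' r0.body ∪ {Lit.neg (PAtom.alpha n)},
        l.redSat Z Z := by
      rintro l (hl | hl)
      · exact (hGoalBody r0 hr0).mpr hb0 l hl
      · rw [Set.mem_singleton_iff] at hl; subst hl
        exact ⟨hα, hα⟩
    have hhd := hZ.1 _ hr' hbZ
    rw [(hGR r0 hr0).1] at hhd
    exact hhd
  · -- Y equation
    ext x
    constructor
    · intro hxY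
      have hopen := hY hxY
      obtain ⟨f, rfl, hch⟩ := hopen
      have hrule : (⟨Head.bot, {Lit.neg (PAtom.h f 0)}⟩ : Rule (PAtom F A)) ∈
          CP DR IR GR n ∪ fixcons X (OccSet F A n) ∪ fixcons Y (OpenSet IR) :=
        mem_B_iff.mpr (Or.inr (Or.inr (Or.inr (Or.inr (Or.inr (Or.inr (Or.inr
          (Or.inl ⟨_, hxY, rfl⟩))))))))
      have hfZ : (PAtom.h f 0 : PAtom F A) ∈ Z := by
        by_contra hc
        exact constraint_fail hZ hrule (by
          intro l hl
          rw [Set.mem_singleton_iff] at hl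
          subst hl
          exact ⟨hc, hc⟩)
      exact ⟨⟨f, rfl, hch⟩, f, hfZ, rfl⟩
    · rintro ⟨hopen, f, hf, rfl⟩
      by_contra hxY
      have hrule : (⟨Head.bot, {Lit.pos (PAtom.h f 0)}⟩ : Rule (PAtom F A)) ∈
          CP DR IR GR n ∪ fixcons X (OccSet F A n) ∪ fixcons Y (OpenSet IR) :=
        mem_B_iff.mpr (Or.inr (Or.inr (Or.inr (Or.inr (Or.inr (Or.inr (Or.inr
          (Or.inr ⟨_, ⟨hopen, hxY⟩, rfl⟩))))))))
      exact constraint_fail hZ hrule (by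
        intro l hl
        rw [Set.mem_singleton_iff] at hl
        subst hl
        exact ⟨hf, hf⟩)

end ASP
open ASP in
/-- Lemma 4 of the paper: there is a stable model `Z` of
`CP ∪ fixcons(X,Occ) ∪ fixcons(Y,Open)` with `α(n) ∉ Z` iff there is an initial
state `s₀ ∈ SM(IR)` represented by `Y` from which the plan `p` achieves the goal. -/
theorem stable_model_iff_initial_state_plan {F A : Type*} [Nonempty F] [Nonempty A]
    (DR IR GR : Program (PAtom F A))
    (hDR : DynRules DR) (hIR : InitRules IR) (hGR : GoalRules GR)
    (hdet : Deterministic DR) (hine : Inertial DR)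
    (hInonempty : (statesOf IR).Nonempty) (hGnonempty : (goalStates GR).Nonempty)
    (hGDT : GDT IR) (n : ℕ) (hn : 1 ≤ n)
    (p : List A) (hp : p.length = n)
    (X : Set (PAtom F A))
    (hXdef : X = {x | ∃ k : Fin p.length, x = PAtom.occ (p.get k) (k.1 + 1)})
    (Y : Set (PAtom F A)) (hY : Y ⊆ OpenSet IR) :
    (∃ Z, StableModel (CP DR IR GR n ∪ fixcons X (OccSet F A n) ∪ fixcons Y (OpenSet IR)) Z ∧
       PAtom.alpha n ∉ Z) ↔
    (∃ s₀ : Set F, StableModel IR (fluSet s₀) ∧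
       Y = {x ∈ OpenSet IR | ∃ f ∈ s₀, x = PAtom.h f 0} ∧
       ∃ S, tauList (tauDR DR) p {s₀} = some S ∧ S ⊆ goalStates GR) := by
  set aAct : ℕ → A := fun i => p.getD (i - 1) (Classical.arbitrary A) with haAct
  have hXocc : ∀ (b : A) (j : ℕ), PAtom.occ b j ∈ X ↔ 1 ≤ j ∧ j ≤ n ∧ b = aAct j := by
    intro b j
    rw [X_occ_iff hXdef, hp]
  have hgetAct : ∀ k, (hk : k < p.length) → p.get ⟨k, hk⟩ = aAct (k + 1) := by
    intro k hk
    rw [haAct]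
    simp [List.getD_eq_getElem?_getD, List.getElem?_eq_getElem hk]
  constructor
  · rintro ⟨Z, hZ, hαZ⟩
    obtain ⟨hInit, hSteps, hGoal, hYeq⟩ :=
      Z_extract hDR hIR hGR hn hXocc hY hZ hαZ
    refine ⟨{f : F | PAtom.h f 0 ∈ Z}, hInit, hYeq, {(({f : F | PAtom.h f n ∈ Z}) : Set F)},
      ?_, ?_⟩
    · have := tauList_singleton (DR := DR) p (fun j => {f : F | PAtom.h f j ∈ Z}) ?_
      · rw [hp] at this
        exact this
      · intro k hk
        have hk' : k + 1 ≤ n := by omega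
        have hstep := hSteps (k + 1) (by omega) hk'
        rw [tauDR_eq_some_iff hdet]
        refine ⟨stepModel {f : F | PAtom.h f (k + 1 - 1) ∈ Z} (aAct (k + 1))
          {f : F | PAtom.h f (k + 1) ∈ Z}, ?_, ?_⟩
        · rw [hgetAct k hk]
          have he : k + 1 - 1 = k := by omega
          rw [he] at hstep ⊢
          exact hstep
        · ext f
          simp [mem_stepModel_flu]
    · intro s hs
      rw [Set.mem_singleton_iff] at hs
      subst hs
      exact (mem_goalStates_iff hGR).mpr hGoal
  · rintro ⟨s₀, hs0, hYeq, S, hτ, hSG⟩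
    obtain ⟨σ, hσ0, hσstep, hS⟩ := tauList_extract p s₀ S hτ
    have hstep' : ∀ i, 1 ≤ i → i ≤ n →
        StableModel (stepProg DR (σ (i - 1)) (aAct i)) (stepModel (σ (i - 1)) (aAct i) (σ i)) := by
      intro i h1 h2
      have hk : i - 1 < p.length := by omega
      have := hσstep (i - 1) hk
      rw [hgetAct (i - 1) hk] at this
      have he : i - 1 + 1 = i := by omega
      rw [he] at this
      obtain ⟨M, hM, hflu⟩ := (tauDR_eq_some_iff hdet).mp this
      have hshape := step_shape hDR hM
      rw [← hflu] at hshape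
      rw [← hshape]
      exact hM
    have hgoal' : StableModel (choiceAllFlu F A ∪ GR) (fluSet (σ n)) := by
      have hmem : σ n ∈ S := by
        rw [hS, hp]
        rfl
      exact (mem_goalStates_iff hGR).mp (hSG hmem)
    refine ⟨ZC n aAct σ, ?_, ZC_alpha⟩
    exact ZC_stable hDR hIR hGR hn hXocc (fun x hx => X_shape hXdef hx) hY
      (hσ0 ▸ hs0) hstep' hgoal' (hσ0 ▸ hYeq)
end
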